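/- arXiv:2510.24288 — 6 statements merged into one kernel-verified Lean document; each statement's English description precedes it below -/
import Mathlib

section
/- The function Φ(x) := f(x, y*(x)) is differentiable on ℝ^p and its gradient is given by the hypergradient formula ∇Φ(x) = ∇_x f(x, y*(x)) − ∇_x∇_y l(x, y*(x)) · [∇_y∇_y l(x, y*(x))]⁻¹ · ∇_y f(x, y*(x)) for every x ∈ ℝ^p. -/
noncomputable section

open scoped RealInnerProductSpace

/-- Partial gradient in the first (upper-level) variable. -/
noncomputable def gradx {p q : ℕ}
    (f : EuclideanSpace ℝ (Fin p) → EuclideanSpace ℝ (Fin q) → ℝ)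
    (x : EuclideanSpace ℝ (Fin p)) (y : EuclideanSpace ℝ (Fin q)) :
    EuclideanSpace ℝ (Fin p) :=
  gradient (fun x' => f x' y) x

/-- Partial gradient in the second (lower-level) variable. -/
noncomputable def grady {p q : ℕ}
    (f : EuclideanSpace ℝ (Fin p) → EuclideanSpace ℝ (Fin q) → ℝ)
    (x : EuclideanSpace ℝ (Fin p)) (y : EuclideanSpace ℝ (Fin q)) :
    EuclideanSpace ℝ (Fin q) :=
  gradient (fun y' => f x y') y

/-- Mixed second derivative `∇ₓ∇_y l (x,y)`, as a continuous linear map `ℝ^q →L ℝ^p`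
(the adjoint of the derivative in `x` of the partial gradient `∇_y l`). -/
noncomputable def hessxy {p q : ℕ}
    (l : EuclideanSpace ℝ (Fin p) → EuclideanSpace ℝ (Fin q) → ℝ)
    (x : EuclideanSpace ℝ (Fin p)) (y : EuclideanSpace ℝ (Fin q)) :
    EuclideanSpace ℝ (Fin q) →L[ℝ] EuclideanSpace ℝ (Fin p) :=
  ContinuousLinearMap.adjoint (fderiv ℝ (fun x' => grady l x' y) x)

/-- Second derivative `∇_y∇_y l (x,y)` in the lower-level variable, as a continuous linear
map `ℝ^q →L ℝ^q`. -/
noncomputable def hessyy {p q : ℕ}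
    (l : EuclideanSpace ℝ (Fin p) → EuclideanSpace ℝ (Fin q) → ℝ)
    (x : EuclideanSpace ℝ (Fin p)) (y : EuclideanSpace ℝ (Fin q)) :
    EuclideanSpace ℝ (Fin q) →L[ℝ] EuclideanSpace ℝ (Fin q) :=
  fderiv ℝ (fun y' => grady l x y') y

/-- Hypergradient surrogate `∇̄f(x,y,v) = ∇ₓ f(x,y) − ∇ₓ∇_y l(x,y) v`. -/
noncomputable def barGradF {p q : ℕ}
    (f l : EuclideanSpace ℝ (Fin p) → EuclideanSpace ℝ (Fin q) → ℝ)
    (x : EuclideanSpace ℝ (Fin p)) (y v : EuclideanSpace ℝ (Fin q)) :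
    EuclideanSpace ℝ (Fin p) :=
  gradx f x y - hessxy l x y v

/-- Gradient of the auxiliary quadratic objective:
`∇_v r(x,y,v) = ∇_y∇_y l(x,y) v − ∇_y f(x,y)`. -/
noncomputable def gradvR {p q : ℕ}
    (f l : EuclideanSpace ℝ (Fin p) → EuclideanSpace ℝ (Fin q) → ℝ)
    (x : EuclideanSpace ℝ (Fin p)) (y v : EuclideanSpace ℝ (Fin q)) :
    EuclideanSpace ℝ (Fin q) :=
  hessyy l x y v - grady f x y


section Aux

variable {p q : ℕ}

lemma inner_grad {V : Type*} [NormedAddCommGroup V] [InnerProductSpace ℝ V] [CompleteSpace V]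
    (g : V → ℝ) (y v : V) : ⟪gradient g y, v⟫ = fderiv ℝ g y v :=
  InnerProductSpace.toDual_symm_apply

lemma strong_mono {l : EuclideanSpace ℝ (Fin p) → EuclideanSpace ℝ (Fin q) → ℝ} {μ : ℝ}
    (hl : ContDiff ℝ 2 fun pr : EuclideanSpace ℝ (Fin p) × EuclideanSpace ℝ (Fin q) =>
      l pr.1 pr.2)
    (x : EuclideanSpace ℝ (Fin p)) (hsc : StrongConvexOn Set.univ μ (l x))
    (y₁ y₂ : EuclideanSpace ℝ (Fin q)) :
    μ * ‖y₁ - y₂‖ ^ 2 ≤ ⟪grady l x y₁ - grady l x y₂, y₁ - y₂⟫ := by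
  have hlx : ContDiff ℝ 2 (fun y => l x y) := hl.comp (contDiff_const.prodMk contDiff_id)
  have hld : ∀ y, DifferentiableAt ℝ (fun y' => l x y') y := fun y =>
    (hlx.differentiable (by norm_num)).differentiableAt
  set d := y₁ - y₂ with hd
  set c : ℝ → EuclideanSpace ℝ (Fin q) := fun t : ℝ => y₂ + t • d with hc
  have hcd : ∀ t, HasDerivAt c d t := by
    intro t
    simpa [hc] using ((hasDerivAt_id t).smul_const d).const_add y₂
  set g : ℝ → ℝ := fun t => l x (c t) - μ / 2 * ‖c t‖ ^ 2 with hgdef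
  have hgd : ∀ t, HasDerivAt g (⟪grady l x (c t), d⟫ - μ / 2 * (⟪c t, d⟫ + ⟪d, c t⟫)) t := by
    intro t
    have h1 : HasDerivAt (fun t => l x (c t)) (⟪grady l x (c t), d⟫) t := by
      have h := ((hld (c t)).hasGradientAt.hasFDerivAt).comp_hasDerivAt t (hcd t)
      simpa [InnerProductSpace.toDual_apply_apply, grady, Function.comp_def] using h
    have h2 : HasDerivAt (fun t => (⟪c t, c t⟫ : ℝ)) (⟪c t, d⟫ + ⟪d, c t⟫) t :=
      (hcd t).inner ℝ (hcd t)
    have hfun : (fun t => (⟪c t, c t⟫ : ℝ)) = fun t => ‖c t‖ ^ 2 :=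
      funext fun t => real_inner_self_eq_norm_sq _
    rw [hfun] at h2
    have h2' := h2.const_mul (μ / 2)
    exact h1.sub h2'
  have hconv : ConvexOn ℝ Set.univ (fun y => l x y - μ / 2 * ‖y‖ ^ 2) :=
    strongConvexOn_iff_convex.mp hsc
  have hgc : ConvexOn ℝ Set.univ g := by
    have h := hconv.comp_affineMap (AffineMap.lineMap y₂ y₁ : ℝ →ᵃ[ℝ] EuclideanSpace ℝ (Fin q))
    simp only [Set.preimage_univ] at h
    suffices hgeq : g = (fun y => l x y - μ / 2 * ‖y‖ ^ 2) ∘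
        ⇑(AffineMap.lineMap y₂ y₁ : ℝ →ᵃ[ℝ] EuclideanSpace ℝ (Fin q)) by rw [hgeq]; exact h
    funext t
    have : c t = AffineMap.lineMap y₂ y₁ t := by
      rw [AffineMap.lineMap_apply_module, hc, hd]
      simp [sub_smul, smul_sub]
      abel
    simp [hgdef, this, Function.comp]
  have hmono := hgc.monotoneOn_deriv (fun t _ => (hgd t).differentiableAt)
  have h01 := hmono (Set.mem_univ (0 : ℝ)) (Set.mem_univ (1 : ℝ)) zero_le_one
  rw [(hgd 0).deriv, (hgd 1).deriv] at h01
  have hc0 : c 0 = y₂ := by simp [hc]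
  have hc1 : c 1 = y₁ := by simp [hc, hd]
  rw [hc0, hc1] at h01
  have e1 : ⟪grady l x y₁ - grady l x y₂, d⟫ = ⟪grady l x y₁, d⟫ - ⟪grady l x y₂, d⟫ :=
    inner_sub_left _ _ _
  have e2 : (⟪d, d⟫ : ℝ) = ⟪y₁, d⟫ - ⟪y₂, d⟫ := by rw [← inner_sub_left]
  have e3 : (⟪d, d⟫ : ℝ) = ‖d‖ ^ 2 := real_inner_self_eq_norm_sq _
  have e4 : (⟪d, y₁⟫ : ℝ) = ⟪y₁, d⟫ := real_inner_comm _ _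
  have e5 : (⟪d, y₂⟫ : ℝ) = ⟪y₂, d⟫ := real_inner_comm _ _
  rw [e4, e5] at h01
  rw [e1, ← e3, e2]
  linarith [h01]

lemma grad_min_eq_zero {l : EuclideanSpace ℝ (Fin p) → EuclideanSpace ℝ (Fin q) → ℝ}
    (hl : ContDiff ℝ 2 fun pr : EuclideanSpace ℝ (Fin p) × EuclideanSpace ℝ (Fin q) =>
      l pr.1 pr.2)
    (ystar : EuclideanSpace ℝ (Fin p) → EuclideanSpace ℝ (Fin q))
    (hystar : ∀ x y, y ≠ ystar x → l x (ystar x) < l x y)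
    (x : EuclideanSpace ℝ (Fin p)) : grady l x (ystar x) = 0 := by
  have hmin : IsLocalMin (fun y => l x y) (ystar x) := by
    apply Filter.Eventually.of_forall
    intro y
    by_cases h : y = ystar x
    · simp [h]
    · exact (hystar x y h).le
  have h0 := hmin.fderiv_eq_zero
  rw [grady, gradient, h0, map_zero]

lemma contDiff_G {l : EuclideanSpace ℝ (Fin p) → EuclideanSpace ℝ (Fin q) → ℝ}
    (hl : ContDiff ℝ 2 fun pr : EuclideanSpace ℝ (Fin p) × EuclideanSpace ℝ (Fin q) =>
      l pr.1 pr.2) :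
    ContDiff ℝ 1 (fun pr : EuclideanSpace ℝ (Fin p) × EuclideanSpace ℝ (Fin q) =>
      grady l pr.1 pr.2) := by
  have hW : ContDiff ℝ 1 (fun pr : EuclideanSpace ℝ (Fin p) × EuclideanSpace ℝ (Fin q) =>
      fderiv ℝ (fun y => l pr.1 y) pr.2) := by
    exact ContDiff.fderiv
      (f := fun (pr : EuclideanSpace ℝ (Fin p) × EuclideanSpace ℝ (Fin q))
        (y : EuclideanSpace ℝ (Fin q)) => l pr.1 y)
      (g := fun pr : EuclideanSpace ℝ (Fin p) × EuclideanSpace ℝ (Fin q) => pr.2)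
      (hl.comp ((contDiff_fst.fst).prodMk contDiff_snd)) contDiff_snd (by norm_num)
  have heq : (fun pr : EuclideanSpace ℝ (Fin p) × EuclideanSpace ℝ (Fin q) =>
        grady l pr.1 pr.2)
      = (⇑(InnerProductSpace.toDual ℝ (EuclideanSpace ℝ (Fin q))).symm) ∘
        (fun pr : EuclideanSpace ℝ (Fin p) × EuclideanSpace ℝ (Fin q) =>
          fderiv ℝ (fun y => l pr.1 y) pr.2) := rfl
  rw [heq]
  exact ((InnerProductSpace.toDual ℝ (EuclideanSpace ℝ (Fin q))).symm.contDiff).comp hW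

lemma hess_pos {l : EuclideanSpace ℝ (Fin p) → EuclideanSpace ℝ (Fin q) → ℝ} {μ : ℝ}
    (hl : ContDiff ℝ 2 fun pr : EuclideanSpace ℝ (Fin p) × EuclideanSpace ℝ (Fin q) =>
      l pr.1 pr.2)
    (x : EuclideanSpace ℝ (Fin p)) (hsc : StrongConvexOn Set.univ μ (l x))
    (y v : EuclideanSpace ℝ (Fin q)) :
    μ * ‖v‖ ^ 2 ≤ ⟪hessyy l x y v, v⟫ := by
  have hGc := contDiff_G hl
  have hdy : DifferentiableAt ℝ (fun y' => grady l x y') y :=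
    ((hGc.differentiable one_ne_zero) (x, y)).comp y
      ((differentiableAt_const x).prodMk differentiableAt_id)
  have hc : HasDerivAt (fun t : ℝ => y + t • v) v 0 := by
    simpa using ((hasDerivAt_id (0 : ℝ)).smul_const v).const_add y
  have h0 : (fun t : ℝ => y + t • v) 0 = y := by simp
  have hm : HasDerivAt (fun t : ℝ => grady l x (y + t • v)) (hessyy l x y v) 0 := by
    have hF : HasFDerivAt (fun y' => grady l x y') (fderiv ℝ (fun y' => grady l x y') y)
        ((fun t : ℝ => y + t • v) 0) := by rw [h0]; exact hdy.hasFDerivAt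
    have := hF.comp_hasDerivAt 0 hc
    simpa [hessyy, Function.comp_def] using this
  have hw : HasDerivAt (fun t : ℝ => (⟪grady l x (y + t • v), v⟫ : ℝ)) ⟪hessyy l x y v, v⟫ 0 := by
    have := hm.inner ℝ (hasDerivAt_const 0 v)
    simpa using this
  have hslope := hasDerivAt_iff_tendsto_slope.mp hw
  have hsub : nhdsWithin (0 : ℝ) (Set.Ioi 0) ≤ nhdsWithin (0 : ℝ) {(0 : ℝ)}ᶜ :=
    nhdsWithin_mono 0 (fun t ht => ne_of_gt ht)
  refine ge_of_tendsto (hslope.mono_left hsub) ?_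
  filter_upwards [self_mem_nhdsWithin] with t ht
  have htpos : (0 : ℝ) < t := ht
  have key := strong_mono hl x hsc (y + t • v) y
  simp only [add_sub_cancel_left] at key
  rw [real_inner_smul_right] at key
  have hns : ‖t • v‖ ^ 2 = t ^ 2 * ‖v‖ ^ 2 := by
    rw [norm_smul, Real.norm_eq_abs, mul_pow, sq_abs]
  rw [hns] at key
  have hinner : (⟪grady l x (y + t • v) - grady l x y, v⟫ : ℝ)
      = ⟪grady l x (y + t • v), v⟫ - ⟪grady l x y, v⟫ := inner_sub_left _ _ _
  rw [hinner] at key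
  rw [slope_def_field]
  have h00 : (⟪grady l x (y + (0:ℝ) • v), v⟫ : ℝ) = ⟪grady l x y, v⟫ := by norm_num
  rw [h00, sub_zero, le_div_iff₀ htpos]
  nlinarith [key, htpos]

lemma hess_symm {l : EuclideanSpace ℝ (Fin p) → EuclideanSpace ℝ (Fin q) → ℝ}
    (hl : ContDiff ℝ 2 fun pr : EuclideanSpace ℝ (Fin p) × EuclideanSpace ℝ (Fin q) =>
      l pr.1 pr.2)
    (x : EuclideanSpace ℝ (Fin p)) (y u w : EuclideanSpace ℝ (Fin q)) :
    ⟪hessyy l x y u, w⟫ = ⟪u, hessyy l x y w⟫ := by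
  have hlx : ContDiff ℝ 2 (fun y' => l x y') := hl.comp (contDiff_const.prodMk contDiff_id)
  have hsym : IsSymmSndFDerivAt ℝ (fun y' => l x y') y :=
    hlx.contDiffAt.isSymmSndFDerivAt (by norm_num)
  have happ : ∀ z, hessyy l x y z
      = (InnerProductSpace.toDual ℝ (EuclideanSpace ℝ (Fin q))).symm
          ((fderiv ℝ (fderiv ℝ (fun y' => l x y')) y) z) := by
    intro z
    have h1 : fderiv ℝ (fun y' => grady l x y') y
        = fderiv ℝ ((⇑(InnerProductSpace.toDual ℝ (EuclideanSpace ℝ (Fin q))).symm) ∘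
            fun y' => fderiv ℝ (fun y'' => l x y'') y') y := rfl
    rw [hessyy, h1, LinearIsometryEquiv.comp_fderiv]
    simp
  rw [happ u, happ w, InnerProductSpace.toDual_symm_apply, real_inner_comm,
    InnerProductSpace.toDual_symm_apply]
  exact hsym u w

end Aux

section Pair

variable {p q : ℕ}

lemma fderiv_pair_apply {g : EuclideanSpace ℝ (Fin p) → EuclideanSpace ℝ (Fin q) → ℝ}
    (hg : ContDiff ℝ 2 fun pr : EuclideanSpace ℝ (Fin p) × EuclideanSpace ℝ (Fin q) =>
      g pr.1 pr.2)
    (x : EuclideanSpace ℝ (Fin p)) (y : EuclideanSpace ℝ (Fin q))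
    (u : EuclideanSpace ℝ (Fin p)) (v : EuclideanSpace ℝ (Fin q)) :
    fderiv ℝ (fun pr : EuclideanSpace ℝ (Fin p) × EuclideanSpace ℝ (Fin q) => g pr.1 pr.2)
        (x, y) (u, v) = ⟪gradx g x y, u⟫ + ⟪grady g x y, v⟫ := by
  have hgd : DifferentiableAt ℝ
      (fun pr : EuclideanSpace ℝ (Fin p) × EuclideanSpace ℝ (Fin q) => g pr.1 pr.2) (x, y) :=
    ((hg.differentiable (by norm_num)) _)
  set D := fderiv ℝ
    (fun pr : EuclideanSpace ℝ (Fin p) × EuclideanSpace ℝ (Fin q) => g pr.1 pr.2) (x, y) with hD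
  have hx : HasFDerivAt (fun x' => g x' y)
      (D.comp ((ContinuousLinearMap.id ℝ (EuclideanSpace ℝ (Fin p))).prod 0)) x := by
    have h1 : HasFDerivAt (fun x' : EuclideanSpace ℝ (Fin p) => (x', y))
        ((ContinuousLinearMap.id ℝ (EuclideanSpace ℝ (Fin p))).prod 0) x :=
      (hasFDerivAt_id x).prodMk (hasFDerivAt_const y x)
    exact hgd.hasFDerivAt.comp x h1
  have hy : HasFDerivAt (fun y' => g x y')
      (D.comp ((0 : EuclideanSpace ℝ (Fin q) →L[ℝ] EuclideanSpace ℝ (Fin p)).prod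
        (ContinuousLinearMap.id ℝ (EuclideanSpace ℝ (Fin q))))) y := by
    have h1 : HasFDerivAt (fun y' : EuclideanSpace ℝ (Fin q) => (x, y'))
        ((0 : EuclideanSpace ℝ (Fin q) →L[ℝ] EuclideanSpace ℝ (Fin p)).prod
          (ContinuousLinearMap.id ℝ (EuclideanSpace ℝ (Fin q)))) y :=
      (hasFDerivAt_const x y).prodMk (hasFDerivAt_id y)
    exact hgd.hasFDerivAt.comp y h1
  have e1 : (⟪gradx g x y, u⟫ : ℝ) = D (u, 0) := by
    rw [gradx, inner_grad, hx.fderiv]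
    simp
  have e2 : (⟪grady g x y, v⟫ : ℝ) = D (0, v) := by
    rw [grady, inner_grad, hy.fderiv]
    simp
  have e3 : ((u, v) : EuclideanSpace ℝ (Fin p) × EuclideanSpace ℝ (Fin q))
      = (u, (0 : EuclideanSpace ℝ (Fin q))) + ((0 : EuclideanSpace ℝ (Fin p)), v) := by
    simp
  rw [e1, e2, ← map_add]
  exact congrArg D (by simp)

end Pair

set_option maxHeartbeats 1000000

/-- **Hypergradient formula (eq. 2)**: under the nonconvex–strongly-convex bilevel
assumptions, `Φ(x) := f(x, y*(x))` is differentiable with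
`∇Φ(x) = ∇ₓ f(x,y*(x)) − ∇ₓ∇_y l(x,y*(x)) [∇_y∇_y l(x,y*(x))]⁻¹ ∇_y f(x,y*(x))`. -/
theorem hypergradient_formula
    {p q : ℕ} (f l : EuclideanSpace ℝ (Fin p) → EuclideanSpace ℝ (Fin q) → ℝ)
    (μ Lf1 Ll2 Cfx Cfy Clxy Clyy : ℝ) (hμ : 0 < μ)
    (hfC2 : ContDiff ℝ 2 (fun pr : EuclideanSpace ℝ (Fin p) × EuclideanSpace ℝ (Fin q) =>
      f pr.1 pr.2))
    (hlC2 : ContDiff ℝ 2 (fun pr : EuclideanSpace ℝ (Fin p) × EuclideanSpace ℝ (Fin q) =>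
      l pr.1 pr.2))
    (hsc : ∀ x, StrongConvexOn Set.univ μ (l x))
    (hLfx : ∀ x₁ y₁ x₂ y₂, ‖gradx f x₁ y₁ - gradx f x₂ y₂‖ ≤ Lf1 * (‖x₁ - x₂‖ + ‖y₁ - y₂‖))
    (hLfy : ∀ x₁ y₁ x₂ y₂, ‖grady f x₁ y₁ - grady f x₂ y₂‖ ≤ Lf1 * (‖x₁ - x₂‖ + ‖y₁ - y₂‖))
    (hLxy : ∀ x₁ y₁ x₂ y₂, ‖hessxy l x₁ y₁ - hessxy l x₂ y₂‖ ≤ Ll2 * (‖x₁ - x₂‖ + ‖y₁ - y₂‖))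
    (hLyy : ∀ x₁ y₁ x₂ y₂, ‖hessyy l x₁ y₁ - hessyy l x₂ y₂‖ ≤ Ll2 * (‖x₁ - x₂‖ + ‖y₁ - y₂‖))
    (hCfx : ∀ x y, ‖gradx f x y‖ ≤ Cfx)
    (hCfy : ∀ x y, ‖grady f x y‖ ≤ Cfy)
    (hClxy : ∀ x y, ‖hessxy l x y‖ ≤ Clxy)
    (hClyy : ∀ x y, ‖hessyy l x y‖ ≤ Clyy)
    (ystar : EuclideanSpace ℝ (Fin p) → EuclideanSpace ℝ (Fin q))
    (hystar : ∀ x y, y ≠ ystar x → l x (ystar x) < l x y) :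
    ∀ x, HasGradientAt (fun x' => f x' (ystar x'))
      (gradx f x (ystar x) -
        hessxy l x (ystar x)
          (Ring.inverse (hessyy l x (ystar x)) (grady f x (ystar x)))) x := by
  intro x₀
  have hGc : ContDiff ℝ 1 (fun pr : EuclideanSpace ℝ (Fin p) × EuclideanSpace ℝ (Fin q) =>
      grady l pr.1 pr.2) := contDiff_G hlC2
  have hGdiff : Differentiable ℝ
      (fun pr : EuclideanSpace ℝ (Fin p) × EuclideanSpace ℝ (Fin q) => grady l pr.1 pr.2) :=
    hGc.differentiable one_ne_zero
  have hfo : ∀ x, grady l x (ystar x) = 0 := grad_min_eq_zero hlC2 ystar hystar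
  have hmono := fun x => strong_mono hlC2 x (hsc x)
  have hClxy0 : 0 ≤ Clxy := le_trans (norm_nonneg _) (hClxy x₀ (ystar x₀))
  -- Lipschitz continuity of `grady l` in `x`
  have hlipx : ∀ x₁ x₂ w, ‖grady l x₁ w - grady l x₂ w‖ ≤ Clxy * ‖x₁ - x₂‖ := by
    intro x₁ x₂ w
    have hdiff : ∀ z, DifferentiableAt ℝ (fun x' => grady l x' w) z := by
      intro z
      exact ((hGdiff (z, w)).comp z ((differentiableAt_id (x := z)).prodMk (differentiableAt_const w) :
        DifferentiableAt ℝ (fun x' : EuclideanSpace ℝ (Fin p) => (x', w)) z) :)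
    have hbound : ∀ z, ‖fderiv ℝ (fun x' => grady l x' w) z‖ ≤ Clxy := by
      intro z
      have hnorm : ‖hessxy l z w‖ = ‖fderiv ℝ (fun x' => grady l x' w) z‖ := by
        simp only [hessxy]
        exact ContinuousLinearMap.adjoint.norm_map _
      rw [← hnorm]; exact hClxy z w
    exact Convex.norm_image_sub_le_of_norm_fderiv_le (fun z _ => hdiff z) (fun z _ => hbound z)
      convex_univ trivial trivial
  -- Lipschitz continuity of `ystar`
  have hlipy : ∀ x₁ x₂, ‖ystar x₁ - ystar x₂‖ ≤ Clxy / μ * ‖x₁ - x₂‖ := by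
    intro x₁ x₂
    rcases eq_or_ne (ystar x₁) (ystar x₂) with h | h
    · rw [h, sub_self, norm_zero]
      positivity
    have key := hmono x₁ (ystar x₁) (ystar x₂)
    rw [hfo x₁] at key
    have h0 : (0 : EuclideanSpace ℝ (Fin q)) - grady l x₁ (ystar x₂)
        = grady l x₂ (ystar x₂) - grady l x₁ (ystar x₂) := by rw [hfo x₂]
    rw [h0] at key
    have h2 : (⟪grady l x₂ (ystar x₂) - grady l x₁ (ystar x₂), ystar x₁ - ystar x₂⟫ : ℝ)
        ≤ Clxy * ‖x₂ - x₁‖ * ‖ystar x₁ - ystar x₂‖ :=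
      le_trans (real_inner_le_norm _ _)
        (mul_le_mul_of_nonneg_right (hlipx x₂ x₁ _) (norm_nonneg _))
    have hΔ : 0 < ‖ystar x₁ - ystar x₂‖ := by
      rw [norm_pos_iff]; exact sub_ne_zero.mpr h
    have h3 := le_trans key h2
    rw [norm_sub_rev x₂ x₁] at h3
    rw [div_mul_eq_mul_div, le_div_iff₀ hμ]
    have hsq : ‖ystar x₁ - ystar x₂‖ ^ 2
        = ‖ystar x₁ - ystar x₂‖ * ‖ystar x₁ - ystar x₂‖ := sq _
    nlinarith [h3, hΔ, hsq]
  have hcont : Continuous ystar := by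
    have hlw : LipschitzWith (Real.toNNReal (Clxy / μ)) ystar := by
      apply LipschitzWith.of_dist_le_mul
      intro a b
      rw [dist_eq_norm, dist_eq_norm]
      refine le_trans (hlipy a b) (mul_le_mul_of_nonneg_right ?_ (norm_nonneg _))
      exact Real.le_coe_toNNReal _
    exact hlw.continuous
  -- derivative data of G at (x₀, ystar x₀)
  have hGd : DifferentiableAt ℝ
      (fun pr : EuclideanSpace ℝ (Fin p) × EuclideanSpace ℝ (Fin q) => grady l pr.1 pr.2)
      (x₀, ystar x₀) := hGdiff _
  set DG := fderiv ℝ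
    (fun pr : EuclideanSpace ℝ (Fin p) × EuclideanSpace ℝ (Fin q) => grady l pr.1 pr.2)
    (x₀, ystar x₀) with hDGdef
  set B := fderiv ℝ (fun x' => grady l x' (ystar x₀)) x₀ with hBdef
  set H := hessyy l x₀ (ystar x₀) with hHdef
  have hHy : H = DG.comp ((0 : EuclideanSpace ℝ (Fin q) →L[ℝ] EuclideanSpace ℝ (Fin p)).prod
      (ContinuousLinearMap.id ℝ (EuclideanSpace ℝ (Fin q)))) := by
    have hinc : HasFDerivAt (fun y' : EuclideanSpace ℝ (Fin q) => ((x₀, y') :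
        EuclideanSpace ℝ (Fin p) × EuclideanSpace ℝ (Fin q)))
        ((0 : EuclideanSpace ℝ (Fin q) →L[ℝ] EuclideanSpace ℝ (Fin p)).prod
          (ContinuousLinearMap.id ℝ (EuclideanSpace ℝ (Fin q)))) (ystar x₀) :=
      (hasFDerivAt_const x₀ (ystar x₀)).prodMk (hasFDerivAt_id (ystar x₀))
    exact (hGd.hasFDerivAt.comp (ystar x₀) hinc).fderiv
  have hBx : B = DG.comp ((ContinuousLinearMap.id ℝ (EuclideanSpace ℝ (Fin p))).prod 0) := by
    have hinc : HasFDerivAt (fun x' : EuclideanSpace ℝ (Fin p) => ((x', ystar x₀) :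
        EuclideanSpace ℝ (Fin p) × EuclideanSpace ℝ (Fin q)))
        ((ContinuousLinearMap.id ℝ (EuclideanSpace ℝ (Fin p))).prod 0) x₀ :=
      (hasFDerivAt_id x₀).prodMk (hasFDerivAt_const (ystar x₀) x₀)
    exact (hGd.hasFDerivAt.comp x₀ hinc).fderiv
  have hDGsplit : ∀ u v, DG (u, v) = B u + H v := by
    intro u v
    rw [hBx, hHy]
    simp only [ContinuousLinearMap.comp_apply, ContinuousLinearMap.prod_apply,
      ContinuousLinearMap.coe_id', id_eq, ContinuousLinearMap.zero_apply]
    rw [← map_add]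
    congr 1
    simp
  -- positivity and invertibility of H
  have hpos : ∀ v, μ * ‖v‖ ^ 2 ≤ ⟪H v, v⟫ := fun v => hess_pos hlC2 x₀ (hsc x₀) (ystar x₀) v
  have hsymm : ∀ u w, (⟪H u, w⟫ : ℝ) = ⟪u, H w⟫ := fun u w => hess_symm hlC2 x₀ (ystar x₀) u w
  have hinj : Function.Injective H := by
    intro a b hab
    have hz : H (a - b) = 0 := by rw [map_sub, hab, sub_self]
    have h1 := hpos (a - b)
    rw [hz] at h1
    simp only [inner_zero_left] at h1
    have hs : ‖a - b‖ ^ 2 ≤ 0 := by nlinarith [h1]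
    have h0 : ‖a - b‖ ^ 2 = 0 := le_antisymm hs (sq_nonneg _)
    have := norm_eq_zero.mp (sq_eq_zero_iff.mp h0)
    exact sub_eq_zero.mp this
  have hsurj : Function.Surjective H :=
    LinearMap.injective_iff_surjective.mp
      (show Function.Injective (H : EuclideanSpace ℝ (Fin q) →ₗ[ℝ] EuclideanSpace ℝ (Fin q))
        from hinj)
  set e₀ := LinearEquiv.ofBijective (H : EuclideanSpace ℝ (Fin q) →ₗ[ℝ] EuclideanSpace ℝ (Fin q))
    ⟨hinj, hsurj⟩ with he₀
  set K := LinearMap.toContinuousLinearMap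
    (e₀.symm : EuclideanSpace ℝ (Fin q) →ₗ[ℝ] EuclideanSpace ℝ (Fin q)) with hKdef
  have hKH : ∀ v, K (H v) = v := fun v => e₀.symm_apply_apply v
  have hHK : ∀ v, H (K v) = v := fun v => e₀.apply_symm_apply v
  have hRinv : Ring.inverse H = K := by
    have hu : H * K = 1 := by
      refine ContinuousLinearMap.ext fun v => ?_
      simp only [ContinuousLinearMap.mul_apply, ContinuousLinearMap.one_apply]
      exact hHK v
    have hu' : K * H = 1 := by
      refine ContinuousLinearMap.ext fun v => ?_
      simp only [ContinuousLinearMap.mul_apply, ContinuousLinearMap.one_apply]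
      exact hKH v
    set u : (EuclideanSpace ℝ (Fin q) →L[ℝ] EuclideanSpace ℝ (Fin q))ˣ :=
      ⟨H, K, hu, hu'⟩ with hudef
    have : H = (u : EuclideanSpace ℝ (Fin q) →L[ℝ] EuclideanSpace ℝ (Fin q)) := rfl
    rw [this, Ring.inverse_unit u]
    rfl
  have hKsym : ∀ a b, (⟪K a, b⟫ : ℝ) = ⟪a, K b⟫ := by
    intro a b
    calc (⟪K a, b⟫ : ℝ) = ⟪K a, H (K b)⟫ := by rw [hHK]
      _ = ⟪H (K a), K b⟫ := (hsymm (K a) (K b)).symm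
      _ = ⟪a, K b⟫ := by rw [hHK]
  -- differentiability of ystar at x₀
  set T : EuclideanSpace ℝ (Fin p) →L[ℝ] EuclideanSpace ℝ (Fin q) := -(K.comp B) with hTdef
  have hyd : HasFDerivAt ystar T x₀ := by
    have hφt : Filter.Tendsto
        (fun x' => ((x', ystar x') : EuclideanSpace ℝ (Fin p) × EuclideanSpace ℝ (Fin q)))
        (nhds x₀) (nhds (x₀, ystar x₀)) :=
      (continuous_id.prodMk hcont).tendsto x₀
    have hlil := (hGd.hasFDerivAt.isLittleO).comp_tendsto hφt
    have hbigO : (fun x' => ((x', ystar x') : EuclideanSpace ℝ (Fin p) ×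
          EuclideanSpace ℝ (Fin q)) - (x₀, ystar x₀)) =O[nhds x₀] (fun x' => x' - x₀) := by
      apply Asymptotics.IsBigO.of_bound (1 + Clxy / μ)
      filter_upwards with x'
      have h1 : ((x', ystar x') : EuclideanSpace ℝ (Fin p) × EuclideanSpace ℝ (Fin q))
          - (x₀, ystar x₀) = (x' - x₀, ystar x' - ystar x₀) := by rw [Prod.mk_sub_mk]
      rw [h1, Prod.norm_def]
      have hd : 0 ≤ Clxy / μ := div_nonneg hClxy0 hμ.le
      apply max_le
      · nlinarith [norm_nonneg (x' - x₀), hd]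
      · calc ‖ystar x' - ystar x₀‖ ≤ Clxy / μ * ‖x' - x₀‖ := hlipy x' x₀
          _ ≤ (1 + Clxy / μ) * ‖x' - x₀‖ := by nlinarith [norm_nonneg (x' - x₀)]
          _ ≤ (1 + Clxy / μ) * ‖x' - x₀‖ := le_refl _
    have h2 : (fun x' => DG (((x', ystar x') : EuclideanSpace ℝ (Fin p) ×
          EuclideanSpace ℝ (Fin q)) - (x₀, ystar x₀))) =o[nhds x₀] (fun x' => x' - x₀) := by
      refine ((hlil.trans_isBigO hbigO).neg_left).congr (fun x' => ?_) (fun x' => rfl)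
      simp only [Function.comp_apply]
      rw [hfo x', hfo x₀]
      simp
      rfl
    have h3 : (fun x' => K (DG (((x', ystar x') : EuclideanSpace ℝ (Fin p) ×
          EuclideanSpace ℝ (Fin q)) - (x₀, ystar x₀)))) =o[nhds x₀] (fun x' => x' - x₀) :=
      (K.isBigO_comp _ _).trans_isLittleO h2
    have heq2 : ∀ x', K (DG (((x', ystar x') : EuclideanSpace ℝ (Fin p) ×
          EuclideanSpace ℝ (Fin q)) - (x₀, ystar x₀)))
        = ystar x' - ystar x₀ - T (x' - x₀) := by
      intro x'
      have h1 : ((x', ystar x') : EuclideanSpace ℝ (Fin p) × EuclideanSpace ℝ (Fin q))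
          - (x₀, ystar x₀) = (x' - x₀, ystar x' - ystar x₀) := by rw [Prod.mk_sub_mk]
      rw [h1, hDGsplit, map_add, hKH]
      rw [hTdef]
      simp only [ContinuousLinearMap.neg_apply, ContinuousLinearMap.comp_apply, sub_neg_eq_add]
      abel
    refine hasFDerivAt_iff_isLittleO.mpr ?_
    simp only [heq2] at h3
    exact h3
  -- chain rule
  have hφd : HasFDerivAt
      (fun x' => ((x', ystar x') : EuclideanSpace ℝ (Fin p) × EuclideanSpace ℝ (Fin q)))
      ((ContinuousLinearMap.id ℝ (EuclideanSpace ℝ (Fin p))).prod T) x₀ :=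
    (hasFDerivAt_id x₀).prodMk hyd
  have hfd : DifferentiableAt ℝ
      (fun pr : EuclideanSpace ℝ (Fin p) × EuclideanSpace ℝ (Fin q) => f pr.1 pr.2)
      (x₀, ystar x₀) := ((hfC2.differentiable (by norm_num)) _)
  have hΦ : HasFDerivAt (fun x' => f x' (ystar x'))
      ((fderiv ℝ (fun pr : EuclideanSpace ℝ (Fin p) × EuclideanSpace ℝ (Fin q) => f pr.1 pr.2)
          (x₀, ystar x₀)).comp
        ((ContinuousLinearMap.id ℝ (EuclideanSpace ℝ (Fin p))).prod T)) x₀ :=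
    by have h := hfd.hasFDerivAt.comp x₀ hφd; exact h
  rw [hasGradientAt_iff_hasFDerivAt]
  have hmain : (InnerProductSpace.toDual ℝ (EuclideanSpace ℝ (Fin p)))
      (gradx f x₀ (ystar x₀) - hessxy l x₀ (ystar x₀)
        (Ring.inverse H (grady f x₀ (ystar x₀))))
      = (fderiv ℝ (fun pr : EuclideanSpace ℝ (Fin p) × EuclideanSpace ℝ (Fin q) => f pr.1 pr.2)
          (x₀, ystar x₀)).comp
        ((ContinuousLinearMap.id ℝ (EuclideanSpace ℝ (Fin p))).prod T) := by
    apply ContinuousLinearMap.ext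
    intro u
    rw [ContinuousLinearMap.comp_apply]
    simp only [ContinuousLinearMap.prod_apply, ContinuousLinearMap.coe_id', id_eq]
    rw [fderiv_pair_apply hfC2 x₀ (ystar x₀) u (T u)]
    rw [InnerProductSpace.toDual_apply_apply, inner_sub_left, hRinv]
    have hxyadj : (⟪hessxy l x₀ (ystar x₀) (K (grady f x₀ (ystar x₀))), u⟫ : ℝ)
        = ⟪K (grady f x₀ (ystar x₀)), B u⟫ := by
      simp only [hessxy]
      exact ContinuousLinearMap.adjoint_inner_left _ _ _
    rw [hxyadj, hKsym]
    rw [hTdef]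
    simp only [ContinuousLinearMap.neg_apply, ContinuousLinearMap.comp_apply, inner_neg_right]
    ring
  rw [hmain]
  exact hΦ
end
end

section
/- The function Φ(x) := f(x, y*(x)) is differentiable and its gradient ∇Φ is L_Φ-Lipschitz on ℝ^p, where L_Φ := (L_{f,1} + L_{l,2}·C_{fy}/μ) · (1 + C_{lxy}/μ)². -/
noncomputable section

open scoped RealInnerProductSpace

open Filter Topology Asymptotics

section Aux

lemma fo_convex {F : Type*} [NormedAddCommGroup F] [InnerProductSpace ℝ F]
    (h : F → ℝ) (hc : ConvexOn ℝ Set.univ h) {y z : F} {D : F →L[ℝ] ℝ}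
    (hd : HasFDerivAt h D y) : D (z - y) ≤ h z - h y := by
  set φ : ℝ → ℝ := fun t => h (y + t • (z - y)) with hφ
  have hder : HasDerivAt φ (D (z - y)) 0 := by
    have h1 : HasDerivAt (fun t : ℝ => y + t • (z - y)) (z - y) 0 := by
      simpa using ((hasDerivAt_id (0:ℝ)).smul_const (z - y)).const_add y
    have hd' : HasFDerivAt h D (y + (0:ℝ) • (z - y)) := by simpa using hd
    exact hd'.comp_hasDerivAt (x := (0:ℝ)) h1
  have hslope : ∀ t ∈ Set.Ioo (0:ℝ) 1, slope φ 0 t ≤ h z - h y := by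
    intro t ht
    have hcomb := hc.2 (Set.mem_univ y) (Set.mem_univ z) (by linarith [ht.2] : (0:ℝ) ≤ 1 - t)
      (le_of_lt ht.1) (by ring)
    have hφt : φ t ≤ (1 - t) * h y + t * h z := by
      have he : y + t • (z - y) = (1 - t) • y + t • z := by module
      rw [hφ]; simp only [he]; simpa [smul_eq_mul] using hcomb
    have hφ0 : φ 0 = h y := by simp [hφ]
    rw [slope_def_field, hφ0, sub_zero, div_le_iff₀ ht.1]
    nlinarith [ht.1]
  have htend : Tendsto (slope φ 0) (𝓝[>] 0) (𝓝 (D (z - y))) :=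
    (hasDerivAt_iff_tendsto_slope.1 hder).mono_left
      (nhdsWithin_mono 0 (fun t ht => ne_of_gt ht))
  refine le_of_tendsto htend ?_
  filter_upwards [Ioo_mem_nhdsGT_of_mem (by norm_num : (0:ℝ) ∈ Set.Ico (0:ℝ) 1)] with t ht
  exact hslope t ht

lemma strong_mono_s4 {F : Type*} [NormedAddCommGroup F] [InnerProductSpace ℝ F]
    {μ : ℝ} (h : F → ℝ) (hc : StrongConvexOn Set.univ μ h) {y₁ y₂ : F} {D₁ D₂ : F →L[ℝ] ℝ}
    (hd₁ : HasFDerivAt h D₁ y₁) (hd₂ : HasFDerivAt h D₂ y₂) :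
    μ * ‖y₁ - y₂‖ ^ 2 ≤ D₁ (y₁ - y₂) - D₂ (y₁ - y₂) := by
  have hc' : ConvexOn ℝ Set.univ fun x => h x - μ / 2 * ‖x‖ ^ 2 :=
    strongConvexOn_iff_convex.1 hc
  have hD : ∀ (y : F) (D : F →L[ℝ] ℝ), HasFDerivAt h D y →
      HasFDerivAt (fun x => h x - μ / 2 * ‖x‖ ^ 2)
        (D - (μ / 2) • (2 • (innerSL ℝ y))) y := by
    intro y D hD
    exact hD.sub (((hasStrictFDerivAt_norm_sq y).hasFDerivAt).const_smul (μ / 2))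
  have h1 := fo_convex _ hc' (hD y₁ D₁ hd₁) (z := y₂)
  have h2 := fo_convex _ hc' (hD y₂ D₂ hd₂) (z := y₁)
  have e1 : ((D₁ - (μ / 2) • (2 • (innerSL ℝ y₁))) (y₂ - y₁) : ℝ)
      = D₁ (y₂ - y₁) - μ * ⟪y₁, y₂ - y₁⟫ := by
    simp only [ContinuousLinearMap.sub_apply, ContinuousLinearMap.smul_apply, smul_eq_mul,
      innerSL_apply_apply]
    ring
  have e2 : ((D₂ - (μ / 2) • (2 • (innerSL ℝ y₂))) (y₁ - y₂) : ℝ)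
      = D₂ (y₁ - y₂) - μ * ⟪y₂, y₁ - y₂⟫ := by
    simp only [ContinuousLinearMap.sub_apply, ContinuousLinearMap.smul_apply, smul_eq_mul,
      innerSL_apply_apply]
    ring
  rw [e1] at h1; rw [e2] at h2
  have hnorm : ‖y₁ - y₂‖ ^ 2 = ⟪y₁, y₁ - y₂⟫ - ⟪y₂, y₁ - y₂⟫ := by
    rw [← inner_sub_left, real_inner_self_eq_norm_sq]
  have hmap : D₁ (y₂ - y₁) = - D₁ (y₁ - y₂) := by
    rw [← ContinuousLinearMap.map_neg]; congr 1; abel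
  have hi : ⟪y₁, y₂ - y₁⟫ = - ⟪y₁, y₁ - y₂⟫ := by
    rw [← inner_neg_right]; congr 1; abel
  rw [hmap, hi] at h1
  rw [hnorm]; linarith [h1, h2]

lemma hasFDerivAt_partial_left {E F G : Type*} [NormedAddCommGroup E] [NormedSpace ℝ E]
    [NormedAddCommGroup F] [NormedSpace ℝ F] [NormedAddCommGroup G] [NormedSpace ℝ G]
    {φ : E × F → G} {D : E × F →L[ℝ] G} {x : E} {y : F} (h : HasFDerivAt φ D (x, y)) :
    HasFDerivAt (fun x' => φ (x', y)) (D.comp (ContinuousLinearMap.inl ℝ E F)) x :=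
  h.comp x (hasFDerivAt_prodMk_left x y)

lemma hasFDerivAt_partial_right {E F G : Type*} [NormedAddCommGroup E] [NormedSpace ℝ E]
    [NormedAddCommGroup F] [NormedSpace ℝ F] [NormedAddCommGroup G] [NormedSpace ℝ G]
    {φ : E × F → G} {D : E × F →L[ℝ] G} {x : E} {y : F} (h : HasFDerivAt φ D (x, y)) :
    HasFDerivAt (fun y' => φ (x, y')) (D.comp (ContinuousLinearMap.inr ℝ E F)) y :=
  h.comp y (hasFDerivAt_prodMk_right x y)

lemma coercive_fderiv {F : Type*} [NormedAddCommGroup F] [InnerProductSpace ℝ F]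
    {μ : ℝ} {w : F → F} {G : F →L[ℝ] F} {y : F} (hG : HasFDerivAt w G y)
    (hmono : ∀ y₁, μ * ‖y₁ - y‖ ^ 2 ≤ ⟪w y₁ - w y, y₁ - y⟫) (v : F) :
    μ * ‖v‖ ^ 2 ≤ ⟪G v, v⟫ := by
  have hder : HasDerivAt (fun t : ℝ => w (y + t • v)) (G v) 0 := by
    have h1 : HasDerivAt (fun t : ℝ => y + t • v) v 0 := by
      simpa using ((hasDerivAt_id (0:ℝ)).smul_const v).const_add y
    have hG' : HasFDerivAt w G (y + (0:ℝ) • v) := by simpa using hG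
    exact hG'.comp_hasDerivAt (x := (0:ℝ)) h1
  have h2 : Tendsto (fun t : ℝ => t⁻¹ • (w (y + t • v) - w y)) (𝓝[>] 0) (𝓝 (G v)) := by
    have h3 : Tendsto (slope (fun t : ℝ => w (y + t • v)) 0) (𝓝[>] 0) (𝓝 (G v)) :=
      (hasDerivAt_iff_tendsto_slope.1 hder).mono_left
        (nhdsWithin_mono 0 fun t ht => ne_of_gt ht)
    refine h3.congr fun t => ?_
    simp [slope_def_module]
  have htend : Tendsto (fun t : ℝ => ⟪t⁻¹ • (w (y + t • v) - w y), v⟫) (𝓝[>] 0)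
      (𝓝 ⟪G v, v⟫) := h2.inner tendsto_const_nhds
  refine ge_of_tendsto htend ?_
  filter_upwards [self_mem_nhdsWithin] with t (ht : 0 < t)
  have key := hmono (y + t • v)
  have hsub : y + t • v - y = t • v := by abel
  rw [hsub] at key
  simp only [real_inner_smul_right, real_inner_smul_left] at key
  simp only [real_inner_smul_left, conj_trivial]
  have hn : ‖t • v‖ ^ 2 = t ^ 2 * ‖v‖ ^ 2 := by
    rw [norm_smul]; simp [abs_of_pos ht]; ring
  rw [hn] at key
  rw [le_inv_mul_iff₀ ht]
  nlinarith [key]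

lemma implicit_hasFDerivAt {E F : Type*} [NormedAddCommGroup E] [NormedSpace ℝ E]
    [NormedAddCommGroup F] [NormedSpace ℝ F]
    {g : E × F → F} {ys : E → F} {x₀ : E} {D : E × F →L[ℝ] F} {K : ℝ}
    (hg : HasFDerivAt g D (x₀, ys x₀))
    (hzero : ∀ x, g (x, ys x) = 0)
    (hlip : ∀ x₁ x₂, ‖ys x₁ - ys x₂‖ ≤ K * ‖x₁ - x₂‖)
    (Geq : F ≃L[ℝ] F) (hGeq : (Geq : F →L[ℝ] F) = D.comp (ContinuousLinearMap.inr ℝ E F)) :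
    HasFDerivAt ys
      (-((Geq.symm : F →L[ℝ] F).comp (D.comp (ContinuousLinearMap.inl ℝ E F)))) x₀ := by
  set h : E → E × F := fun x => (x, ys x) with hh
  have hyscont : Tendsto ys (𝓝 x₀) (𝓝 (ys x₀)) := by
    rw [tendsto_iff_norm_sub_tendsto_zero]
    have hb : Tendsto (fun x => K * ‖x - x₀‖) (𝓝 x₀) (𝓝 0) := by
      have : Tendsto (fun x : E => ‖x - x₀‖) (𝓝 x₀) (𝓝 0) := by
        simpa using (tendsto_iff_norm_sub_tendsto_zero.1 (tendsto_id (x := 𝓝 x₀)))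
      simpa using this.const_mul K
    exact squeeze_zero (fun x => norm_nonneg _) (fun x => hlip x x₀) hb
  have hcont : Tendsto h (𝓝 x₀) (𝓝 (x₀, ys x₀)) := (tendsto_id).prodMk_nhds hyscont
  have step1 : (fun x => g (h x) - g (h x₀) - D (h x - h x₀)) =o[𝓝 x₀]
      (fun x => h x - h x₀) := (hg.isLittleO).comp_tendsto hcont
  have step2 : (fun x => h x - h x₀) =O[𝓝 x₀] (fun x => x - x₀) := by
    refine IsBigO.of_bound (1 + |K|) (Eventually.of_forall fun x => ?_)
    have : h x - h x₀ = ((x - x₀, ys x - ys x₀) : E × F) := rfl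
    rw [this, Prod.norm_def]
    refine max_le ?_ ?_
    · show ‖x - x₀‖ ≤ _
      nlinarith [abs_nonneg K, norm_nonneg (x - x₀)]
    · show ‖ys x - ys x₀‖ ≤ _
      calc ‖ys x - ys x₀‖ ≤ K * ‖x - x₀‖ := hlip x x₀
        _ ≤ (1 + |K|) * ‖x - x₀‖ := by
            have h1 := le_abs_self K
            nlinarith [norm_nonneg (x - x₀)]
  have step3 : (fun x => D (h x - h x₀)) =o[𝓝 x₀] (fun x => x - x₀) := by
    have := (step1.trans_isBigO step2).neg_left
    refine this.congr' (Eventually.of_forall fun x => ?_) (Eventually.of_forall fun _ => rfl)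
    simp [hzero, hh]
  have step5 : (fun x => (Geq.symm : F →L[ℝ] F) (D (h x - h x₀))) =o[𝓝 x₀]
      (fun x => x - x₀) :=
    ((Geq.symm : F →L[ℝ] F).isBigO_comp _ _).trans_isLittleO step3
  rw [hasFDerivAt_iff_isLittleO]
  have hdec : ∀ x, (Geq.symm : F →L[ℝ] F) (D (h x - h x₀))
      = ys x - ys x₀ - (-((Geq.symm : F →L[ℝ] F).comp
          (D.comp (ContinuousLinearMap.inl ℝ E F)))) (x - x₀) := by
    intro x
    have hsplit : h x - h x₀ = ContinuousLinearMap.inl ℝ E F (x - x₀)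
        + ContinuousLinearMap.inr ℝ E F (ys x - ys x₀) := by
      simp [hh, Prod.ext_iff]
    rw [hsplit, map_add, map_add]
    have h2 : (Geq.symm : F →L[ℝ] F) (D (ContinuousLinearMap.inr ℝ E F (ys x - ys x₀)))
        = ys x - ys x₀ := by
      have : D (ContinuousLinearMap.inr ℝ E F (ys x - ys x₀)) = Geq (ys x - ys x₀) :=
        (DFunLike.congr_fun hGeq (ys x - ys x₀)).symm
      rw [this]
      exact Geq.symm_apply_apply _
    rw [h2]
    simp only [ContinuousLinearMap.neg_apply, ContinuousLinearMap.comp_apply]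
    abel
  refine step5.congr' (Eventually.of_forall fun x => ?_) (Eventually.of_forall fun _ => rfl)
  exact hdec x

lemma differentiable_of_subsingleton' {E G : Type*} [NormedAddCommGroup E] [NormedSpace ℝ E]
    [Subsingleton E] [NormedAddCommGroup G] [NormedSpace ℝ G] (φ : E → G) :
    Differentiable ℝ φ := by
  intro x
  refine (HasFDerivAt.differentiableAt (f' := 0) ?_)
  rw [hasFDerivAt_iff_isLittleO]
  have : ∀ x' : E, φ x' - φ x - (0 : E →L[ℝ] G) (x' - x) = 0 := by
    intro x'
    rw [Subsingleton.elim x' x]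
    simp
  refine (isLittleO_zero _ _).congr' (Eventually.of_forall fun x' => (this x').symm)
    (Eventually.of_forall fun _ => rfl)

end Aux

/-- The inverse of `toDual` over `ℝ`, as a plain (non-semilinear) linear isometry equiv. -/
noncomputable def toDualSymmLIE (F : Type*) [NormedAddCommGroup F] [InnerProductSpace ℝ F]
    [CompleteSpace F] : (F →L[ℝ] ℝ) ≃ₗᵢ[ℝ] F where
  toFun := fun φ => (InnerProductSpace.toDual ℝ F).symm φ
  map_add' := fun a b => map_add _ a b
  map_smul' := fun c a => by
    simpa using (InnerProductSpace.toDual ℝ F).symm.map_smulₛₗ c a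
  invFun := fun w => (InnerProductSpace.toDual ℝ F) w
  left_inv := fun a => (InnerProductSpace.toDual ℝ F).apply_symm_apply a
  right_inv := fun w => (InnerProductSpace.toDual ℝ F).symm_apply_apply w
  norm_map' := fun a => (InnerProductSpace.toDual ℝ F).symm.norm_map a

local notation "Es" p:max => EuclideanSpace ℝ (Fin p)





set_option maxHeartbeats 2000000 in
/-- **Smoothness of the total objective (Lemma C.2 part 1)**: `Φ(x) := f(x, y*(x))` is
differentiable and its gradient is `L_Φ`-Lipschitz with
`L_Φ = (L_{f,1} + L_{l,2}·C_{fy}/μ)·(1 + C_{lxy}/μ)²`. -/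
theorem hyperobjective_gradient_lipschitz
    {p q : ℕ} (f l : EuclideanSpace ℝ (Fin p) → EuclideanSpace ℝ (Fin q) → ℝ)
    (μ Lf1 Ll2 Cfx Cfy Clxy Clyy : ℝ) (hμ : 0 < μ)
    (hfC2 : ContDiff ℝ 2 (fun pr : EuclideanSpace ℝ (Fin p) × EuclideanSpace ℝ (Fin q) =>
      f pr.1 pr.2))
    (hlC2 : ContDiff ℝ 2 (fun pr : EuclideanSpace ℝ (Fin p) × EuclideanSpace ℝ (Fin q) =>
      l pr.1 pr.2))
    (hsc : ∀ x, StrongConvexOn Set.univ μ (l x))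
    (hLfx : ∀ x₁ y₁ x₂ y₂, ‖gradx f x₁ y₁ - gradx f x₂ y₂‖ ≤ Lf1 * (‖x₁ - x₂‖ + ‖y₁ - y₂‖))
    (hLfy : ∀ x₁ y₁ x₂ y₂, ‖grady f x₁ y₁ - grady f x₂ y₂‖ ≤ Lf1 * (‖x₁ - x₂‖ + ‖y₁ - y₂‖))
    (hLxy : ∀ x₁ y₁ x₂ y₂, ‖hessxy l x₁ y₁ - hessxy l x₂ y₂‖ ≤ Ll2 * (‖x₁ - x₂‖ + ‖y₁ - y₂‖))
    (hLyy : ∀ x₁ y₁ x₂ y₂, ‖hessyy l x₁ y₁ - hessyy l x₂ y₂‖ ≤ Ll2 * (‖x₁ - x₂‖ + ‖y₁ - y₂‖))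
    (hCfx : ∀ x y, ‖gradx f x y‖ ≤ Cfx)
    (hCfy : ∀ x y, ‖grady f x y‖ ≤ Cfy)
    (hClxy : ∀ x y, ‖hessxy l x y‖ ≤ Clxy)
    (hClyy : ∀ x y, ‖hessyy l x y‖ ≤ Clyy)
    (ystar : EuclideanSpace ℝ (Fin p) → EuclideanSpace ℝ (Fin q))
    (hystar : ∀ x y, y ≠ ystar x → l x (ystar x) < l x y) :
    Differentiable ℝ (fun x => f x (ystar x)) ∧
      ∀ x₁ x₂,
        ‖gradient (fun x => f x (ystar x)) x₁ - gradient (fun x => f x (ystar x)) x₂‖ ≤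
          (Lf1 + Ll2 * Cfy / μ) * (1 + Clxy / μ) ^ 2 * ‖x₁ - x₂‖ := by
  classical
  rcases Nat.eq_zero_or_pos p with hp | hp
  · -- trivial case: the upper-level space is a point
    subst hp
    haveI : Subsingleton (EuclideanSpace ℝ (Fin 0)) :=
      ⟨fun a b => by ext i; exact i.elim0⟩
    refine ⟨differentiable_of_subsingleton' _, fun x₁ x₂ => ?_⟩
    rw [Subsingleton.elim x₁ x₂]
    simp
  -- main case
  -- nonnegativity of the constants
  obtain ⟨i0, hi0⟩ : ∃ i : Fin p, True := ⟨⟨0, hp⟩, trivial⟩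
  set xunit : EuclideanSpace ℝ (Fin p) := EuclideanSpace.single i0 (1:ℝ) with hxunit
  have hxunit_norm : ‖xunit - 0‖ = 1 := by
    rw [sub_zero, hxunit, EuclideanSpace.norm_single]; norm_num
  have hLf1 : 0 ≤ Lf1 := by
    have h := hLfx xunit 0 0 0
    rw [hxunit_norm] at h
    simpa using (norm_nonneg _).trans h
  have hLl2 : 0 ≤ Ll2 := by
    have h := hLxy xunit 0 0 0
    rw [hxunit_norm] at h
    simpa using (norm_nonneg _).trans h
  have hCfy0 : 0 ≤ Cfy := (norm_nonneg _).trans (hCfy 0 0)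
  have hClxy0 : 0 ≤ Clxy := (norm_nonneg _).trans (hClxy 0 0)
  -- differentiability of the uncurried functions
  have hld : Differentiable ℝ (fun pr : (Es p) × (Es q) => l pr.1 pr.2) :=
    hlC2.differentiable (by norm_num)
  have hfd : Differentiable ℝ (fun pr : (Es p) × (Es q) => f pr.1 pr.2) :=
    hfC2.differentiable (by norm_num)
  -- the lower-level gradient map, uncurried
  set gl : (Es p) × (Es q) → (Es q) := fun pr => grady l pr.1 pr.2 with hgl_def
  have hglC1 : ContDiff ℝ 1 gl := by
    have hDlC1 : ContDiff ℝ 1 (fderiv ℝ (fun pr' : (Es p) × (Es q) => l pr'.1 pr'.2)) :=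
      hlC2.fderiv_right (by norm_num)
    have hkey : gl = fun pr : (Es p) × (Es q) =>
        (toDualSymmLIE (Es q))
          ((fderiv ℝ (fun pr' : (Es p) × (Es q) => l pr'.1 pr'.2) pr).comp
            (ContinuousLinearMap.inr ℝ (Es p) (Es q))) := by
      funext pr
      have h1 : fderiv ℝ (fun y' => l pr.1 y') pr.2
          = (fderiv ℝ (fun pr' : (Es p) × (Es q) => l pr'.1 pr'.2) pr).comp
              (ContinuousLinearMap.inr ℝ (Es p) (Es q)) := by
        have h2 : HasFDerivAt (fun pr' : (Es p) × (Es q) => l pr'.1 pr'.2)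
            (fderiv ℝ (fun pr' : (Es p) × (Es q) => l pr'.1 pr'.2) (pr.1, pr.2)) (pr.1, pr.2) :=
          (hld (pr.1, pr.2)).hasFDerivAt
        have := (hasFDerivAt_partial_right h2).fderiv
        simpa using this
      show gradient (fun y' => l pr.1 y') pr.2 = _
      rw [gradient, h1]
      rfl
    rw [hkey]
    exact (toDualSymmLIE (Es q)).contDiff.comp (hDlC1.clm_comp contDiff_const)
  have hgld : Differentiable ℝ gl := hglC1.differentiable (by norm_num)
  -- partial derivatives of gl
  have hJ : ∀ (x : (Es p)) (y : (Es q)), fderiv ℝ (fun x' => grady l x' y) x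
      = (fderiv ℝ gl (x, y)).comp (ContinuousLinearMap.inl ℝ (Es p) (Es q)) := fun x y =>
    (hasFDerivAt_partial_left (hgld (x, y)).hasFDerivAt).fderiv
  have hGfd : ∀ (x : (Es p)) (y : (Es q)),
      HasFDerivAt (fun y' => grady l x y') ((fderiv ℝ gl (x, y)).comp
        (ContinuousLinearMap.inr ℝ (Es p) (Es q))) y := fun x y =>
    hasFDerivAt_partial_right (hgld (x, y)).hasFDerivAt
  have hGeq2 : ∀ (x : (Es p)) (y : (Es q)), hessyy l x y
      = (fderiv ℝ gl (x, y)).comp (ContinuousLinearMap.inr ℝ (Es p) (Es q)) := fun x y =>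
    (hGfd x y).fderiv
  have hGfd' : ∀ (x : (Es p)) (y : (Es q)), HasFDerivAt (fun y' => grady l x y') (hessyy l x y) y := by
    intro x y; rw [hGeq2]; exact hGfd x y
  -- gradient of l in y as a derivative
  have hgradl : ∀ (x : (Es p)) (y : (Es q)), HasFDerivAt (fun y' => l x y')
      ((InnerProductSpace.toDual ℝ (Es q)) (grady l x y)) y := by
    intro x y
    have h2 : HasFDerivAt (fun pr' : (Es p) × (Es q) => l pr'.1 pr'.2)
        (fderiv ℝ (fun pr' : (Es p) × (Es q) => l pr'.1 pr'.2) (x, y)) (x, y) :=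
      (hld (x, y)).hasFDerivAt
    exact (DifferentiableAt.hasGradientAt
      (hasFDerivAt_partial_right h2).differentiableAt).hasFDerivAt
  -- strong monotonicity of the lower-level gradient
  have hmono : ∀ (x : (Es p)) (y₁ y₂ : (Es q)),
      μ * ‖y₁ - y₂‖ ^ 2 ≤ ⟪grady l x y₁ - grady l x y₂, y₁ - y₂⟫ := by
    intro x y₁ y₂
    have h := strong_mono_s4 (fun y => l x y) (hsc x) (hgradl x y₁) (hgradl x y₂)
    simpa [InnerProductSpace.toDual_apply_apply, inner_sub_left] using h
  -- coercivity of the Hessian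
  have hcoerc : ∀ (x : (Es p)) (y : (Es q)) (v : (Es q)), μ * ‖v‖ ^ 2 ≤ ⟪hessyy l x y v, v⟫ := fun x y v =>
    coercive_fderiv (hGfd' x y) (fun y₁ => hmono x y₁ y) v
  -- first-order optimality at ystar
  have hmin : ∀ (x : (Es p)) (y : (Es q)), l x (ystar x) ≤ l x y := by
    intro x y
    by_cases h : y = ystar x
    · rw [h]
    · exact (hystar x y h).le
  have hgys : ∀ x : (Es p), grady l x (ystar x) = 0 := by
    intro x
    have hloc : IsLocalMin (fun y' => l x y') (ystar x) :=
      Filter.Eventually.of_forall fun y => hmin x y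
    show (InnerProductSpace.toDual ℝ (Es q)).symm (fderiv ℝ (fun y' => l x y') (ystar x)) = 0
    rw [hloc.fderiv_eq_zero]
    simp
  -- Lipschitz continuity of the lower-level gradient in x
  have hglip : ∀ (y : (Es q)) (x₁ x₂ : (Es p)),
      ‖grady l x₁ y - grady l x₂ y‖ ≤ Clxy * ‖x₁ - x₂‖ := by
    intro y x₁ x₂
    have hdiffx : ∀ x : (Es p), DifferentiableAt ℝ (fun x' => grady l x' y) x := fun x =>
      (hasFDerivAt_partial_left (hgld (x, y)).hasFDerivAt).differentiableAt
    refine Convex.norm_image_sub_le_of_norm_fderiv_le (fun x _ => hdiffx x)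
      (fun x _ => ?_) convex_univ (Set.mem_univ x₂) (Set.mem_univ x₁)
    have h1 : ‖hessxy l x y‖ = ‖fderiv ℝ (fun x' => grady l x' y) x‖ :=
      ContinuousLinearMap.adjoint.norm_map _
    rw [← h1]
    exact hClxy x y
  -- Lipschitz continuity of ystar
  have hyslip : ∀ x₁ x₂ : (Es p), ‖ystar x₁ - ystar x₂‖ ≤ Clxy / μ * ‖x₁ - x₂‖ := by
    intro x₁ x₂
    by_cases hz : ystar x₁ - ystar x₂ = 0
    · rw [hz, norm_zero]
      positivity
    have h1 := hmono x₁ (ystar x₁) (ystar x₂)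
    rw [hgys x₁, zero_sub] at h1
    have h2 : ⟪-grady l x₁ (ystar x₂), ystar x₁ - ystar x₂⟫
        = ⟪grady l x₂ (ystar x₂) - grady l x₁ (ystar x₂), ystar x₁ - ystar x₂⟫ := by
      rw [hgys x₂, zero_sub]
    rw [h2] at h1
    have h3 : ⟪grady l x₂ (ystar x₂) - grady l x₁ (ystar x₂), ystar x₁ - ystar x₂⟫
        ≤ Clxy * ‖x₁ - x₂‖ * ‖ystar x₁ - ystar x₂‖ := by
      refine (real_inner_le_norm _ _).trans ?_
      have h4 : ‖grady l x₂ (ystar x₂) - grady l x₁ (ystar x₂)‖ ≤ Clxy * ‖x₁ - x₂‖ := by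
        rw [show ‖x₁ - x₂‖ = ‖x₂ - x₁‖ from norm_sub_rev _ _]
        exact hglip (ystar x₂) x₂ x₁
      exact mul_le_mul_of_nonneg_right h4 (norm_nonneg _)
    have h5 : 0 < ‖ystar x₁ - ystar x₂‖ := norm_pos_iff.2 hz
    rw [div_mul_eq_mul_div, le_div_iff₀ hμ]
    nlinarith [h1, h3, h5]
  -- invertibility of the Hessian at (x, ystar x)
  have hGbij : ∀ x : (Es p), ∃ T : (Es q) ≃L[ℝ] (Es q), (T : (Es q) →L[ℝ] (Es q)) = hessyy l x (ystar x) := by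
    intro x
    have hinj : Function.Injective (hessyy l x (ystar x)) := by
      intro a b hab
      have h1 := hcoerc x (ystar x) (a - b)
      rw [map_sub, hab, sub_self] at h1
      have h2 : μ * ‖a - b‖ ^ 2 ≤ 0 := by simpa using h1
      have h4 : ‖a - b‖ ^ 2 ≤ 0 := by nlinarith
      have h5 : ‖a - b‖ ^ 2 = 0 := le_antisymm h4 (sq_nonneg _)
      have h6 : ‖a - b‖ = 0 := by
        exact pow_eq_zero_iff (n := 2) (by norm_num) |>.1 h5
      rw [norm_eq_zero, sub_eq_zero] at h6
      exact h6
    have hsurj : Function.Surjective (hessyy l x (ystar x)) :=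
      (LinearMap.injective_iff_surjective
        (f := (hessyy l x (ystar x) : (Es q) →ₗ[ℝ] (Es q)))).1 hinj
    exact ⟨(LinearEquiv.ofBijective ((hessyy l x (ystar x)) : (Es q) →ₗ[ℝ] (Es q))
      ⟨hinj, hsurj⟩).toContinuousLinearEquiv, by ext v; rfl⟩
  choose Geq hGeqcoe using hGbij
  have hGeqapp : ∀ (x : (Es p)) (w : (Es q)), Geq x w = hessyy l x (ystar x) w := by
    intro x w
    rw [← hGeqcoe x]
    rfl
  -- the auxiliary vector v
  set v : (Es p) → (Es q) := fun x => (Geq x).symm (grady f x (ystar x)) with hv_def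
  have hGv : ∀ x : (Es p), hessyy l x (ystar x) (v x) = grady f x (ystar x) := by
    intro x
    rw [← hGeqapp x (v x), hv_def]
    exact (Geq x).apply_symm_apply _
  have hvb : ∀ x : (Es p), ‖v x‖ ≤ Cfy / μ := by
    intro x
    have h1 := hcoerc x (ystar x) (v x)
    rw [hGv x] at h1
    have h2 : ⟪grady f x (ystar x), v x⟫ ≤ Cfy * ‖v x‖ :=
      (real_inner_le_norm _ _).trans
        (mul_le_mul_of_nonneg_right (hCfy x (ystar x)) (norm_nonneg _))
    by_cases hz : ‖v x‖ = 0
    · rw [hz]; positivity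
    have h3 : 0 < ‖v x‖ := lt_of_le_of_ne (norm_nonneg _) (Ne.symm hz)
    rw [le_div_iff₀ hμ]
    nlinarith [h1, h2, h3]
  -- differentiability of ystar via the implicit function theorem
  have hgzero : ∀ x : (Es p), gl (x, ystar x) = 0 := fun x => hgys x
  have hys_fd : ∀ x₀ : (Es p), HasFDerivAt ystar
      (-(((Geq x₀).symm : (Es q) →L[ℝ] (Es q)).comp ((fderiv ℝ gl (x₀, ystar x₀)).comp
        (ContinuousLinearMap.inl ℝ (Es p) (Es q))))) x₀ := by
    intro x₀
    refine implicit_hasFDerivAt (hgld (x₀, ystar x₀)).hasFDerivAt hgzero hyslip (Geq x₀) ?_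
    rw [hGeqcoe x₀, hGeq2 x₀ (ystar x₀)]
  -- differentiability of the total objective
  have hΦ : ∀ x₀ : (Es p), HasFDerivAt (fun x => f x (ystar x))
      ((fderiv ℝ (fun pr : (Es p) × (Es q) => f pr.1 pr.2) (x₀, ystar x₀)).comp
        ((ContinuousLinearMap.id ℝ (Es p)).prod
          (-(((Geq x₀).symm : (Es q) →L[ℝ] (Es q)).comp ((fderiv ℝ gl (x₀, ystar x₀)).comp
            (ContinuousLinearMap.inl ℝ (Es p) (Es q))))))) x₀ := by
    intro x₀
    exact ((hfd (x₀, ystar x₀)).hasFDerivAt).comp x₀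
      ((hasFDerivAt_id x₀).prodMk (hys_fd x₀))
  refine ⟨fun x => (hΦ x).differentiableAt, ?_⟩
  -- partial gradients of f as derivatives
  have hfx : ∀ (x : Es p) (y : Es q), HasFDerivAt (fun x' => f x' y)
      ((InnerProductSpace.toDual ℝ (Es p)) (gradx f x y)) x := by
    intro x y
    exact (DifferentiableAt.hasGradientAt
      (hasFDerivAt_partial_left (hfd (x, y)).hasFDerivAt).differentiableAt).hasFDerivAt
  have hfy : ∀ (x : Es p) (y : Es q), HasFDerivAt (fun y' => f x y')
      ((InnerProductSpace.toDual ℝ (Es q)) (grady f x y)) y := by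
    intro x y
    exact (DifferentiableAt.hasGradientAt
      (hasFDerivAt_partial_right (hfd (x, y)).hasFDerivAt).differentiableAt).hasFDerivAt
  -- symmetry of the Hessian in y
  have hsym : ∀ (x : Es p) (a b : Es q),
      ⟪hessyy l x (ystar x) a, b⟫ = ⟪a, hessyy l x (ystar x) b⟫ := by
    intro x a b
    set TD : (Es q) →L[ℝ] ((Es q) →L[ℝ] ℝ) :=
      (toDualSymmLIE (Es q)).symm.toLinearIsometry.toContinuousLinearMap with hTD
    have hf' : ∀ y : Es q, HasFDerivAt (fun y' => l x y')
        ((fun y0 => TD (grady l x y0)) y) y := fun y => hgradl x y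
    have hx2 : HasFDerivAt (fun y0 => TD (grady l x y0))
        (TD.comp (hessyy l x (ystar x))) (ystar x) :=
      TD.hasFDerivAt.comp (ystar x) (hGfd' x (ystar x))
    have h := second_derivative_symmetric hf' hx2 a b
    have ha : ∀ c d : Es q, (TD.comp (hessyy l x (ystar x))) c d
        = ⟪hessyy l x (ystar x) c, d⟫ := fun c d => rfl
    rw [ha, ha] at h
    rw [h, real_inner_comm]
  -- the gradient formula for the total objective
  have hgradΦ : ∀ x : Es p, gradient (fun x' => f x' (ystar x')) x
      = gradx f x (ystar x) - hessxy l x (ystar x) (v x) := by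
    intro x
    have hfe := (hΦ x).fderiv
    show (InnerProductSpace.toDual ℝ (Es p)).symm
      (fderiv ℝ (fun x' => f x' (ystar x')) x) = _
    rw [hfe]
    have hDfl : (fderiv ℝ (fun pr : (Es p) × (Es q) => f pr.1 pr.2) (x, ystar x)).comp
        (ContinuousLinearMap.inl ℝ (Es p) (Es q))
        = (InnerProductSpace.toDual ℝ (Es p)) (gradx f x (ystar x)) :=
      ((hfx x (ystar x)).unique (hasFDerivAt_partial_left (hfd (x, ystar x)).hasFDerivAt)).symm
    have hDfr : (fderiv ℝ (fun pr : (Es p) × (Es q) => f pr.1 pr.2) (x, ystar x)).comp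
        (ContinuousLinearMap.inr ℝ (Es p) (Es q))
        = (InnerProductSpace.toDual ℝ (Es q)) (grady f x (ystar x)) :=
      ((hfy x (ystar x)).unique (hasFDerivAt_partial_right (hfd (x, ystar x)).hasFDerivAt)).symm
    set J : (Es p) →L[ℝ] (Es q) := fderiv ℝ (fun x' => grady l x' (ystar x)) x with hJdef
    set T : (Es p) →L[ℝ] (Es q) := -(((Geq x).symm : (Es q) →L[ℝ] (Es q)).comp
        ((fderiv ℝ gl (x, ystar x)).comp (ContinuousLinearMap.inl ℝ (Es p) (Es q)))) with hTdef
    have hTu : ∀ u : Es p, T u = -((Geq x).symm (J u)) := by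
      intro u
      rw [hTdef, hJdef, hJ x (ystar x)]
      rfl
    have hmain : ((fderiv ℝ (fun pr : (Es p) × (Es q) => f pr.1 pr.2) (x, ystar x)).comp
        ((ContinuousLinearMap.id ℝ (Es p)).prod T))
        = (InnerProductSpace.toDual ℝ (Es p))
            (gradx f x (ystar x) - hessxy l x (ystar x) (v x)) := by
      refine ContinuousLinearMap.ext fun u => ?_
      have step1 : ((fderiv ℝ (fun pr : (Es p) × (Es q) => f pr.1 pr.2) (x, ystar x)).comp
            ((ContinuousLinearMap.id ℝ (Es p)).prod T)) u
          = ⟪gradx f x (ystar x), u⟫ + ⟪grady f x (ystar x), T u⟫ := by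
        calc ((fderiv ℝ (fun pr : (Es p) × (Es q) => f pr.1 pr.2) (x, ystar x)).comp
              ((ContinuousLinearMap.id ℝ (Es p)).prod T)) u
            = (fderiv ℝ (fun pr : (Es p) × (Es q) => f pr.1 pr.2) (x, ystar x))
                (((ContinuousLinearMap.id ℝ (Es p)).prod T) u) := rfl
          _ = (fderiv ℝ (fun pr : (Es p) × (Es q) => f pr.1 pr.2) (x, ystar x))
                (ContinuousLinearMap.inl ℝ (Es p) (Es q) u
                  + ContinuousLinearMap.inr ℝ (Es p) (Es q) (T u)) := by
              congr 1
              simp [Prod.ext_iff]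
          _ = (fderiv ℝ (fun pr : (Es p) × (Es q) => f pr.1 pr.2) (x, ystar x))
                (ContinuousLinearMap.inl ℝ (Es p) (Es q) u)
              + (fderiv ℝ (fun pr : (Es p) × (Es q) => f pr.1 pr.2) (x, ystar x))
                (ContinuousLinearMap.inr ℝ (Es p) (Es q) (T u)) := map_add _ _ _
          _ = ⟪gradx f x (ystar x), u⟫ + ⟪grady f x (ystar x), T u⟫ := by
              have e1 : (fderiv ℝ (fun pr : (Es p) × (Es q) => f pr.1 pr.2) (x, ystar x))
                  (ContinuousLinearMap.inl ℝ (Es p) (Es q) u)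
                  = ⟪gradx f x (ystar x), u⟫ := DFunLike.congr_fun hDfl u
              have e2 : (fderiv ℝ (fun pr : (Es p) × (Es q) => f pr.1 pr.2) (x, ystar x))
                  (ContinuousLinearMap.inr ℝ (Es p) (Es q) (T u))
                  = ⟪grady f x (ystar x), T u⟫ := DFunLike.congr_fun hDfr (T u)
              rw [e1, e2]
      rw [step1, hTu u]
      have hw : hessyy l x (ystar x) ((Geq x).symm (J u)) = J u := by
        rw [← hGeqapp]
        exact (Geq x).apply_symm_apply _
      have hkey : ⟪grady f x (ystar x), -((Geq x).symm (J u))⟫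
          = -⟪hessxy l x (ystar x) (v x), u⟫ := by
        rw [inner_neg_right, ← hGv x, hsym x, hw]
        have e3 : ⟪v x, J u⟫ = ⟪ContinuousLinearMap.adjoint J (v x), u⟫ :=
          (ContinuousLinearMap.adjoint_inner_left J u (v x)).symm
        rw [e3]
        rfl
      rw [hkey]
      have e4 : (InnerProductSpace.toDual ℝ (Es p))
          (gradx f x (ystar x) - hessxy l x (ystar x) (v x)) u
          = ⟪gradx f x (ystar x) - hessxy l x (ystar x) (v x), u⟫ := rfl
      rw [e4, inner_sub_left]
      ring
    rw [hmain]
    exact LinearIsometryEquiv.symm_apply_apply _ _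
  -- final Lipschitz estimate
  intro x₁ x₂
  rw [hgradΦ x₁, hgradΦ x₂]
  have hys : ‖ystar x₁ - ystar x₂‖ ≤ Clxy / μ * ‖x₁ - x₂‖ := hyslip x₁ x₂
  have hΔ0 : (0:ℝ) ≤ ‖x₁ - x₂‖ := norm_nonneg _
  have hK0 : (0:ℝ) ≤ Clxy / μ := by positivity
  have ha : ‖gradx f x₁ (ystar x₁) - gradx f x₂ (ystar x₂)‖
      ≤ Lf1 * (1 + Clxy / μ) * ‖x₁ - x₂‖ := by
    refine (hLfx x₁ (ystar x₁) x₂ (ystar x₂)).trans ?_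
    nlinarith [hys, hLf1, hΔ0]
  have hgf : ‖grady f x₁ (ystar x₁) - grady f x₂ (ystar x₂)‖
      ≤ Lf1 * (1 + Clxy / μ) * ‖x₁ - x₂‖ := by
    refine (hLfy x₁ (ystar x₁) x₂ (ystar x₂)).trans ?_
    nlinarith [hys, hLf1, hΔ0]
  have hHxy : ‖hessxy l x₁ (ystar x₁) - hessxy l x₂ (ystar x₂)‖
      ≤ Ll2 * (1 + Clxy / μ) * ‖x₁ - x₂‖ := by
    refine (hLxy x₁ (ystar x₁) x₂ (ystar x₂)).trans ?_
    nlinarith [hys, hLl2, hΔ0]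
  have hHyy : ‖hessyy l x₁ (ystar x₁) - hessyy l x₂ (ystar x₂)‖
      ≤ Ll2 * (1 + Clxy / μ) * ‖x₁ - x₂‖ := by
    refine (hLyy x₁ (ystar x₁) x₂ (ystar x₂)).trans ?_
    nlinarith [hys, hLl2, hΔ0]
  have hvlip : ‖v x₁ - v x₂‖
      ≤ (Lf1 + Ll2 * Cfy / μ) * (1 + Clxy / μ) / μ * ‖x₁ - x₂‖ := by
    by_cases hz : v x₁ - v x₂ = 0
    · rw [hz, norm_zero]
      positivity
    have h1 := hcoerc x₁ (ystar x₁) (v x₁ - v x₂)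
    have h2 : hessyy l x₁ (ystar x₁) (v x₁ - v x₂)
        = (grady f x₁ (ystar x₁) - grady f x₂ (ystar x₂))
          - (hessyy l x₁ (ystar x₁) - hessyy l x₂ (ystar x₂)) (v x₂) := by
      rw [map_sub, hGv x₁]
      simp only [ContinuousLinearMap.sub_apply]
      rw [← hGv x₂]
      abel
    have hop : ‖(hessyy l x₁ (ystar x₁) - hessyy l x₂ (ystar x₂)) (v x₂)‖
        ≤ Ll2 * (1 + Clxy / μ) * ‖x₁ - x₂‖ * (Cfy / μ) := by
      refine (ContinuousLinearMap.le_opNorm _ _).trans ?_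
      exact mul_le_mul hHyy (hvb x₂) (norm_nonneg _) (by positivity)
    have h3 : ⟪hessyy l x₁ (ystar x₁) (v x₁ - v x₂), v x₁ - v x₂⟫
        ≤ (Lf1 * (1 + Clxy / μ) * ‖x₁ - x₂‖
            + Ll2 * (1 + Clxy / μ) * ‖x₁ - x₂‖ * (Cfy / μ)) * ‖v x₁ - v x₂‖ := by
      rw [h2]
      refine (real_inner_le_norm _ _).trans ?_
      refine mul_le_mul_of_nonneg_right ?_ (norm_nonneg _)
      exact (norm_sub_le _ _).trans (add_le_add hgf hop)
    have h4 : 0 < ‖v x₁ - v x₂‖ := norm_pos_iff.2 hz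
    have hBC : Lf1 * (1 + Clxy / μ) * ‖x₁ - x₂‖
        + Ll2 * (1 + Clxy / μ) * ‖x₁ - x₂‖ * (Cfy / μ)
        = (Lf1 + Ll2 * Cfy / μ) * (1 + Clxy / μ) * ‖x₁ - x₂‖ := by ring
    rw [hBC] at h3
    rw [div_mul_eq_mul_div, le_div_iff₀ hμ]
    nlinarith [h1, h3, h4]
  have hH2 : ‖hessxy l x₂ (ystar x₂)‖ ≤ Clxy := hClxy _ _
  have hv1 : ‖v x₁‖ ≤ Cfy / μ := hvb x₁
  calc ‖(gradx f x₁ (ystar x₁) - hessxy l x₁ (ystar x₁) (v x₁))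
        - (gradx f x₂ (ystar x₂) - hessxy l x₂ (ystar x₂) (v x₂))‖
      ≤ ‖gradx f x₁ (ystar x₁) - gradx f x₂ (ystar x₂)‖
        + ‖hessxy l x₁ (ystar x₁) (v x₁) - hessxy l x₂ (ystar x₂) (v x₂)‖ := by
        rw [show (gradx f x₁ (ystar x₁) - hessxy l x₁ (ystar x₁) (v x₁))
            - (gradx f x₂ (ystar x₂) - hessxy l x₂ (ystar x₂) (v x₂))
            = (gradx f x₁ (ystar x₁) - gradx f x₂ (ystar x₂))
              - (hessxy l x₁ (ystar x₁) (v x₁) - hessxy l x₂ (ystar x₂) (v x₂)) from by abel]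
        exact norm_sub_le _ _
    _ ≤ Lf1 * (1 + Clxy / μ) * ‖x₁ - x₂‖
        + (‖(hessxy l x₁ (ystar x₁) - hessxy l x₂ (ystar x₂)) (v x₁)‖
          + ‖hessxy l x₂ (ystar x₂) (v x₁ - v x₂)‖) := by
        refine add_le_add ha ?_
        rw [show hessxy l x₁ (ystar x₁) (v x₁) - hessxy l x₂ (ystar x₂) (v x₂)
            = (hessxy l x₁ (ystar x₁) - hessxy l x₂ (ystar x₂)) (v x₁)
              + hessxy l x₂ (ystar x₂) (v x₁ - v x₂) from by
          simp only [ContinuousLinearMap.sub_apply, map_sub]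
          abel]
        exact norm_add_le _ _
    _ ≤ Lf1 * (1 + Clxy / μ) * ‖x₁ - x₂‖
        + (Ll2 * (1 + Clxy / μ) * ‖x₁ - x₂‖ * (Cfy / μ)
          + Clxy * ((Lf1 + Ll2 * Cfy / μ) * (1 + Clxy / μ) / μ * ‖x₁ - x₂‖)) := by
        refine add_le_add le_rfl (add_le_add ?_ ?_)
        · exact (ContinuousLinearMap.le_opNorm _ _).trans
            (mul_le_mul hHxy hv1 (norm_nonneg _) (by positivity))
        · exact (ContinuousLinearMap.le_opNorm _ _).trans
            (mul_le_mul hH2 hvlip (norm_nonneg _) hClxy0)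
    _ = (Lf1 + Ll2 * Cfy / μ) * (1 + Clxy / μ) ^ 2 * ‖x₁ - x₂‖ := by
        field_simp
        ring
end
end

section
/- The hypergradient surrogate ∇̄f(x,y,v) := ∇_x f(x,y) − ∇_x∇_y l(x,y) v is jointly L̄_f-Lipschitz on the region ‖v‖ ≤ C_{fy}/μ: for all (x₁,y₁,v₁), (x₂,y₂,v₂) with ‖v₁‖ ≤ C_{fy}/μ, ‖∇̄f(x₁,y₁,v₁) − ∇̄f(x₂,y₂,v₂)‖ ≤ L̄_f · (‖x₁ − x₂‖ + ‖y₁ − y₂‖ + ‖v₁ − v₂‖), where L̄_f := max{ C_{fy}·L_{l,2}/μ + L_{f,1}, L_{l,1} }. -/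
noncomputable section

open scoped RealInnerProductSpace

/-- **Lemma C.3 part 5**: the hypergradient surrogate `∇̄f` is jointly `L̄_f`-Lipschitz in
`(x,y,v)` on the region `‖v‖ ≤ C_{fy}/μ`, with
`L̄_f = max{C_{fy}L_{l,2}/μ + L_{f,1}, L_{l,1}}`. -/
theorem barGradF_joint_lipschitz
    {p q : ℕ} (f l : EuclideanSpace ℝ (Fin p) → EuclideanSpace ℝ (Fin q) → ℝ)
    (μ Lf1 Ll1 Ll2 Cfy : ℝ) (hμ : 0 < μ)
    (hfC2 : ContDiff ℝ 2 (fun pr : EuclideanSpace ℝ (Fin p) × EuclideanSpace ℝ (Fin q) =>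
      f pr.1 pr.2))
    (hlC2 : ContDiff ℝ 2 (fun pr : EuclideanSpace ℝ (Fin p) × EuclideanSpace ℝ (Fin q) =>
      l pr.1 pr.2))
    (hLfx : ∀ x₁ y₁ x₂ y₂, ‖gradx f x₁ y₁ - gradx f x₂ y₂‖ ≤ Lf1 * (‖x₁ - x₂‖ + ‖y₁ - y₂‖))
    (hLfy : ∀ x₁ y₁ x₂ y₂, ‖grady f x₁ y₁ - grady f x₂ y₂‖ ≤ Lf1 * (‖x₁ - x₂‖ + ‖y₁ - y₂‖))
    (hLxy : ∀ x₁ y₁ x₂ y₂, ‖hessxy l x₁ y₁ - hessxy l x₂ y₂‖ ≤ Ll2 * (‖x₁ - x₂‖ + ‖y₁ - y₂‖))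
    (hCfy : ∀ x y, ‖grady f x y‖ ≤ Cfy)
    (hLl1 : ∀ x y, ‖hessxy l x y‖ ≤ Ll1) :
    ∀ x₁ y₁ v₁ x₂ y₂ v₂, ‖v₁‖ ≤ Cfy / μ →
      ‖barGradF f l x₁ y₁ v₁ - barGradF f l x₂ y₂ v₂‖ ≤
        max (Cfy * Ll2 / μ + Lf1) Ll1 * (‖x₁ - x₂‖ + ‖y₁ - y₂‖ + ‖v₁ - v₂‖) := by
  intro x₁ y₁ v₁ x₂ y₂ v₂ hv
  have hs : (0:ℝ) ≤ ‖x₁ - x₂‖ + ‖y₁ - y₂‖ := by positivity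
  have hdv : (0:ℝ) ≤ ‖v₁ - v₂‖ := norm_nonneg _
  have key : barGradF f l x₁ y₁ v₁ - barGradF f l x₂ y₂ v₂ =
      (gradx f x₁ y₁ - gradx f x₂ y₂)
        - ((hessxy l x₁ y₁ - hessxy l x₂ y₂) v₁ + hessxy l x₂ y₂ (v₁ - v₂)) := by
    simp only [barGradF, ContinuousLinearMap.sub_apply, map_sub]
    abel
  have h1 := hLfx x₁ y₁ x₂ y₂
  have h2 : ‖(hessxy l x₁ y₁ - hessxy l x₂ y₂) v₁‖ ≤
      Ll2 * (‖x₁ - x₂‖ + ‖y₁ - y₂‖) * ‖v₁‖ := by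
    calc ‖(hessxy l x₁ y₁ - hessxy l x₂ y₂) v₁‖
        ≤ ‖hessxy l x₁ y₁ - hessxy l x₂ y₂‖ * ‖v₁‖ :=
          ContinuousLinearMap.le_opNorm _ _
      _ ≤ Ll2 * (‖x₁ - x₂‖ + ‖y₁ - y₂‖) * ‖v₁‖ :=
          mul_le_mul_of_nonneg_right (hLxy x₁ y₁ x₂ y₂) (norm_nonneg _)
  have hLl2s : (0:ℝ) ≤ Ll2 * (‖x₁ - x₂‖ + ‖y₁ - y₂‖) :=
    le_trans (norm_nonneg _) (hLxy x₁ y₁ x₂ y₂)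
  have h2' : ‖(hessxy l x₁ y₁ - hessxy l x₂ y₂) v₁‖ ≤
      Ll2 * (‖x₁ - x₂‖ + ‖y₁ - y₂‖) * (Cfy / μ) :=
    h2.trans (mul_le_mul_of_nonneg_left hv hLl2s)
  have h3 : ‖hessxy l x₂ y₂ (v₁ - v₂)‖ ≤ Ll1 * ‖v₁ - v₂‖ := by
    calc ‖hessxy l x₂ y₂ (v₁ - v₂)‖ ≤ ‖hessxy l x₂ y₂‖ * ‖v₁ - v₂‖ :=
          ContinuousLinearMap.le_opNorm _ _
      _ ≤ Ll1 * ‖v₁ - v₂‖ := mul_le_mul_of_nonneg_right (hLl1 x₂ y₂) hdv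
  have hmax1 : Cfy * Ll2 / μ + Lf1 ≤ max (Cfy * Ll2 / μ + Lf1) Ll1 := le_max_left _ _
  have hmax2 : Ll1 ≤ max (Cfy * Ll2 / μ + Lf1) Ll1 := le_max_right _ _
  calc ‖barGradF f l x₁ y₁ v₁ - barGradF f l x₂ y₂ v₂‖
      ≤ ‖gradx f x₁ y₁ - gradx f x₂ y₂‖ +
        (‖(hessxy l x₁ y₁ - hessxy l x₂ y₂) v₁‖ + ‖hessxy l x₂ y₂ (v₁ - v₂)‖) := by
        rw [key]; exact (norm_sub_le _ _).trans (by gcongr; exact norm_add_le _ _)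
    _ ≤ Lf1 * (‖x₁ - x₂‖ + ‖y₁ - y₂‖) +
        (Ll2 * (‖x₁ - x₂‖ + ‖y₁ - y₂‖) * (Cfy / μ) + Ll1 * ‖v₁ - v₂‖) := by
        gcongr
    _ = (Cfy * Ll2 / μ + Lf1) * (‖x₁ - x₂‖ + ‖y₁ - y₂‖) + Ll1 * ‖v₁ - v₂‖ := by
        field_simp; ring
    _ ≤ max (Cfy * Ll2 / μ + Lf1) Ll1 * (‖x₁ - x₂‖ + ‖y₁ - y₂‖) +
        max (Cfy * Ll2 / μ + Lf1) Ll1 * ‖v₁ - v₂‖ := by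
        gcongr
    _ = max (Cfy * Ll2 / μ + Lf1) Ll1 * (‖x₁ - x₂‖ + ‖y₁ - y₂‖ + ‖v₁ - v₂‖) := by ring
end
end

section
/- The map y ↦ v̂*(x,y) := [∇_y∇_y l(x,y)]⁻¹ ∇_y f(x,y) is Lipschitz with constant L̄_v := L_{f,1}/μ + C_{fy}·L_{l,2}/μ²: for every x ∈ ℝ^p and all y₁, y₂ ∈ ℝ^q, ‖v̂*(x,y₁) − v̂*(x,y₂)‖ ≤ (L_{f,1}/μ + C_{fy}·L_{l,2}/μ²) · ‖y₁ − y₂‖. -/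
noncomputable section

open scoped RealInnerProductSpace

open scoped Topology in
lemma mono_hasDerivAt_nonneg {D : ℝ → ℝ} {d t : ℝ} (hm : Monotone D) (hd : HasDerivAt D d t) :
    0 ≤ d := by
  have h := (hd.hasDerivWithinAt (s := Set.Ioi t))
  rw [hasDerivWithinAt_iff_tendsto_slope] at h
  rw [Set.diff_singleton_eq_self (by simp)] at h
  have hne : (𝓝[Set.Ioi t] t).NeBot := nhdsGT_neBot t
  refine ge_of_tendsto h ?_
  filter_upwards [self_mem_nhdsWithin] with u hu
  have htu : t < u := hu
  have : 0 ≤ (D u - D t) / (u - t) :=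
    div_nonneg (sub_nonneg.2 (hm htu.le)) (sub_nonneg.2 htu.le)
  simpa [slope_def_field, div_eq_inv_mul] using this

lemma grady_contDiff {p q : ℕ}
    (l : EuclideanSpace ℝ (Fin p) → EuclideanSpace ℝ (Fin q) → ℝ)
    (hlC2 : ContDiff ℝ 2 (fun pr : EuclideanSpace ℝ (Fin p) × EuclideanSpace ℝ (Fin q) =>
      l pr.1 pr.2)) (x : EuclideanSpace ℝ (Fin p)) :
    ContDiff ℝ 1 (fun y' => grady l x y') := by
  have hly : ContDiff ℝ 2 (fun y' => l x y') := hlC2.comp (contDiff_const.prodMk contDiff_id)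
  have h1 : ContDiff ℝ 1 (fun y' => fderiv ℝ (fun y'' => l x y'') y') :=
    hly.fderiv_right (by norm_num)
  have := ((InnerProductSpace.toDual ℝ (EuclideanSpace ℝ (Fin q))).symm.toContinuousLinearEquiv.contDiff (n := 1)).comp h1
  exact this

lemma hess_coercive {p q : ℕ}
    (l : EuclideanSpace ℝ (Fin p) → EuclideanSpace ℝ (Fin q) → ℝ) (μ : ℝ)
    (hlC2 : ContDiff ℝ 2 (fun pr : EuclideanSpace ℝ (Fin p) × EuclideanSpace ℝ (Fin q) =>
      l pr.1 pr.2))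
    (hsc : ∀ x, StrongConvexOn Set.univ μ (l x))
    (x : EuclideanSpace ℝ (Fin p)) (y v : EuclideanSpace ℝ (Fin q)) :
    μ * ‖v‖ ^ 2 ≤ ⟪hessyy l x y v, v⟫ := by
  have hly : ContDiff ℝ 2 (fun y' => l x y') := hlC2.comp (contDiff_const.prodMk contDiff_id)
  have hgrad1 : ContDiff ℝ 1 (fun y' => grady l x y') := grady_contDiff l hlC2 x
  have hdly : Differentiable ℝ (fun y' => l x y') := hly.differentiable (by norm_num)
  have hdgrad : Differentiable ℝ (fun y' => grady l x y') := hgrad1.differentiable (by norm_num)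
  set c : ℝ → EuclideanSpace ℝ (Fin q) := fun t => y + t • v with hc_def
  have hc : ∀ t, HasDerivAt c v t := by
    intro t
    simpa [hc_def] using ((hasDerivAt_id t).smul_const v).const_add y
  have hc0 : c 0 = y := by simp [hc_def]
  have hinner : ∀ z w : EuclideanSpace ℝ (Fin q),
      fderiv ℝ (fun y' => l x y') z w = ⟪grady l x z, w⟫ := by
    intro z w
    show fderiv ℝ (fun y' => l x y') z w
      = ⟪(InnerProductSpace.toDual ℝ (EuclideanSpace ℝ (Fin q))).symm
          (fderiv ℝ (fun y' => l x y') z), w⟫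
    rw [InnerProductSpace.toDual_symm_apply]
  set ψ : ℝ → ℝ := fun t => l x (c t) - μ / 2 * ‖c t‖ ^ 2 with hψ_def
  set D : ℝ → ℝ := fun t => ⟪grady l x (c t), v⟫ - μ * ⟪c t, v⟫ with hD_def
  have hψD : ∀ t, HasDerivAt ψ (D t) t := by
    intro t
    have h1 : HasDerivAt (fun t => l x (c t)) (⟪grady l x (c t), v⟫) t := by
      have := ((hdly (c t)).hasFDerivAt).comp_hasDerivAt t (hc t)
      rwa [hinner (c t) v] at this
    have h2 : HasDerivAt (fun t => ‖c t‖ ^ 2) (2 * ⟪c t, v⟫) t := (hc t).norm_sq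
    have := h1.sub (h2.const_mul (μ / 2))
    exact this.congr_deriv (by simp only [hD_def]; ring)
  have hderiv : deriv ψ = D := funext fun t => (hψD t).deriv
  have hg : ConvexOn ℝ Set.univ (fun y' : EuclideanSpace ℝ (Fin q) =>
      l x y' - μ / 2 * ‖y'‖ ^ 2) := strongConvexOn_iff_convex.mp (hsc x)
  have hψconv : ConvexOn ℝ Set.univ ψ := by
    have haff := hg.comp_affineMap (AffineMap.lineMap y (y + v) : ℝ →ᵃ[ℝ] EuclideanSpace ℝ (Fin q))
    have heq : ((fun y' : EuclideanSpace ℝ (Fin q) => l x y' - μ / 2 * ‖y'‖ ^ 2) ∘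
        (AffineMap.lineMap y (y + v) : ℝ →ᵃ[ℝ] EuclideanSpace ℝ (Fin q))) = ψ := by
      funext t
      have hpt : (AffineMap.lineMap y (y + v) : ℝ →ᵃ[ℝ] EuclideanSpace ℝ (Fin q)) t = c t := by
        simp only [AffineMap.lineMap_apply_module, hc_def]
        module
      simp [Function.comp, hpt, hψ_def]
    rw [heq] at haff
    simpa using haff
  have hmonoD : Monotone D := by
    have hmono := hψconv.monotoneOn_deriv (fun t _ => (hψD t).differentiableAt)
    rw [hderiv] at hmono
    exact monotoneOn_univ.mp hmono
  -- derivative of D at 0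
  have hHd : HasDerivAt D (⟪hessyy l x y v, v⟫ - μ * ‖v‖ ^ 2) 0 := by
    have hg' : HasDerivAt (fun t => grady l x (c t)) (hessyy l x y v) 0 := by
      have hF : HasFDerivAt (fun y' => grady l x y') (hessyy l x y) (c 0) := by
        rw [hc0]; exact (hdgrad y).hasFDerivAt
      exact hF.comp_hasDerivAt 0 (hc 0)
    have h1 : HasDerivAt (fun t => ⟪grady l x (c t), v⟫) (⟪hessyy l x y v, v⟫) 0 := by
      have := hg'.inner ℝ (hasDerivAt_const (0:ℝ) v)
      simpa using this
    have h2 : HasDerivAt (fun t => ⟪c t, v⟫) (‖v‖ ^ 2) 0 := by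
      have h2' : HasDerivAt (fun t => ⟪c t, v⟫) (⟪v, v⟫) 0 := by
        simpa using (hc 0).inner ℝ (hasDerivAt_const (0:ℝ) v)
      rwa [real_inner_self_eq_norm_sq] at h2'
    exact h1.sub (h2.const_mul μ)
  have := mono_hasDerivAt_nonneg hmonoD hHd
  linarith

lemma hess_unit_and_inv_bound {p q : ℕ}
    (l : EuclideanSpace ℝ (Fin p) → EuclideanSpace ℝ (Fin q) → ℝ) (μ : ℝ) (hμ : 0 < μ)
    (hlC2 : ContDiff ℝ 2 (fun pr : EuclideanSpace ℝ (Fin p) × EuclideanSpace ℝ (Fin q) =>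
      l pr.1 pr.2))
    (hsc : ∀ x, StrongConvexOn Set.univ μ (l x))
    (x : EuclideanSpace ℝ (Fin p)) (y : EuclideanSpace ℝ (Fin q)) :
    IsUnit (hessyy l x y) ∧
      ∀ w, ‖Ring.inverse (hessyy l x y) w‖ ≤ μ⁻¹ * ‖w‖ := by
  set H := hessyy l x y with hH
  have hlow : ∀ v, μ * ‖v‖ ≤ ‖H v‖ := by
    intro v
    rcases eq_or_ne v 0 with rfl | hv
    · simp
    have h1 : μ * ‖v‖ ^ 2 ≤ ‖H v‖ * ‖v‖ :=
      (hess_coercive l μ hlC2 hsc x y v).trans (real_inner_le_norm _ _)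
    have hvpos : (0:ℝ) < ‖v‖ := norm_pos_iff.mpr hv
    nlinarith
  have hinj : Function.Injective H := by
    intro a b hab
    have h0 : H (a - b) = 0 := by rw [map_sub, hab, sub_self]
    have := hlow (a - b)
    rw [h0, norm_zero] at this
    have : ‖a - b‖ ≤ 0 := by nlinarith
    have : a - b = 0 := norm_le_zero_iff.mp this
    exact sub_eq_zero.mp this
  have hsurj : Function.Surjective H :=
    LinearMap.injective_iff_surjective.mp hinj
  have hker : LinearMap.ker (H : EuclideanSpace ℝ (Fin q) →ₗ[ℝ] EuclideanSpace ℝ (Fin q)) = ⊥ := (LinearMap.ker_eq_bot (f := (H : EuclideanSpace ℝ (Fin q) →ₗ[ℝ] EuclideanSpace ℝ (Fin q)))).mpr hinj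
  have hrange : LinearMap.range (H : EuclideanSpace ℝ (Fin q) →ₗ[ℝ] EuclideanSpace ℝ (Fin q)) = ⊤ := (LinearMap.range_eq_top (f := (H : EuclideanSpace ℝ (Fin q) →ₗ[ℝ] EuclideanSpace ℝ (Fin q)))).mpr hsurj
  let e := ContinuousLinearEquiv.ofBijective H hker hrange
  have hecoe : ∀ w, e w = H w := fun w => rfl
  have hunit : IsUnit H := by
    refine ⟨⟨H, e.symm.toContinuousLinearMap, ?_, ?_⟩, rfl⟩
    · refine ContinuousLinearMap.ext fun w => ?_
      simp only [ContinuousLinearMap.mul_apply, ContinuousLinearMap.one_apply,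
        ContinuousLinearEquiv.coe_coe]
      rw [← hecoe]
      exact e.apply_symm_apply w
    · refine ContinuousLinearMap.ext fun w => ?_
      simp only [ContinuousLinearMap.mul_apply, ContinuousLinearMap.one_apply,
        ContinuousLinearEquiv.coe_coe]
      rw [← hecoe w]
      exact e.symm_apply_apply w
  refine ⟨hunit, ?_⟩
  have happ : ∀ w, H (Ring.inverse H w) = w := by
    intro w
    have := Ring.mul_inverse_cancel H hunit
    calc H (Ring.inverse H w) = (H * Ring.inverse H) w := rfl
    _ = w := by rw [this]; rfl
  intro w
  have := hlow (Ring.inverse H w)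
  rw [happ w] at this
  rw [inv_mul_eq_div, le_div_iff₀ hμ, mul_comm]
  exact this

/-- **Lemma C.3 part 7 (second half)**: the map `y ↦ v̂*(x,y) = [∇_y∇_y l(x,y)]⁻¹ ∇_y f(x,y)`
is `(L_{f,1}/μ + C_{fy}L_{l,2}/μ²)`-Lipschitz. -/
theorem auxiliary_solution_lipschitz_in_y
    {p q : ℕ} (f l : EuclideanSpace ℝ (Fin p) → EuclideanSpace ℝ (Fin q) → ℝ)
    (μ Lf1 Ll2 Cfy : ℝ) (hμ : 0 < μ)
    (hfC2 : ContDiff ℝ 2 (fun pr : EuclideanSpace ℝ (Fin p) × EuclideanSpace ℝ (Fin q) =>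
      f pr.1 pr.2))
    (hlC2 : ContDiff ℝ 2 (fun pr : EuclideanSpace ℝ (Fin p) × EuclideanSpace ℝ (Fin q) =>
      l pr.1 pr.2))
    (hsc : ∀ x, StrongConvexOn Set.univ μ (l x))
    (hLfx : ∀ x₁ y₁ x₂ y₂, ‖gradx f x₁ y₁ - gradx f x₂ y₂‖ ≤ Lf1 * (‖x₁ - x₂‖ + ‖y₁ - y₂‖))
    (hLfy : ∀ x₁ y₁ x₂ y₂, ‖grady f x₁ y₁ - grady f x₂ y₂‖ ≤ Lf1 * (‖x₁ - x₂‖ + ‖y₁ - y₂‖))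
    (hLyy : ∀ x₁ y₁ x₂ y₂, ‖hessyy l x₁ y₁ - hessyy l x₂ y₂‖ ≤ Ll2 * (‖x₁ - x₂‖ + ‖y₁ - y₂‖))
    (hCfy : ∀ x y, ‖grady f x y‖ ≤ Cfy) :
    ∀ x y₁ y₂,
      ‖Ring.inverse (hessyy l x y₁) (grady f x y₁) -
          Ring.inverse (hessyy l x y₂) (grady f x y₂)‖ ≤
        (Lf1 / μ + Cfy * Ll2 / μ ^ 2) * ‖y₁ - y₂‖ := by
  intro x y₁ y₂
  obtain ⟨hA, hRA⟩ := hess_unit_and_inv_bound l μ hμ hlC2 hsc x y₁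
  obtain ⟨hB, hRB⟩ := hess_unit_and_inv_bound l μ hμ hlC2 hsc x y₂
  set A := hessyy l x y₁
  set B := hessyy l x y₂
  set RA := Ring.inverse A
  set RB := Ring.inverse B
  set a := grady f x y₁
  set b := grady f x y₂
  have h1 : RA * A = 1 := Ring.inverse_mul_cancel A hA
  have h2 : B * RB = 1 := Ring.mul_inverse_cancel B hB
  have key : RA - RB = RA * (B - A) * RB := by
    rw [mul_sub, sub_mul, mul_assoc, h2, mul_one, h1, one_mul]
  have hsplit : RA a - RB b = RA (a - b) + (RA * (B - A) * RB) b := by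
    rw [← key]
    simp only [map_sub, ContinuousLinearMap.sub_apply]
    abel
  rw [hsplit]
  have hb1 : ‖RA (a - b)‖ ≤ μ⁻¹ * (Lf1 * ‖y₁ - y₂‖) := by
    refine (hRA _).trans ?_
    have := hLfy x y₁ x y₂
    simp only [sub_self, norm_zero, zero_add] at this
    exact mul_le_mul_of_nonneg_left this (by positivity)
  have hb2 : ‖(RA * (B - A) * RB) b‖ ≤ μ⁻¹ * (Ll2 * ‖y₁ - y₂‖ * (μ⁻¹ * Cfy)) := by
    have e1 : (RA * (B - A) * RB) b = RA ((B - A) (RB b)) := rfl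
    rw [e1]
    refine (hRA _).trans ?_
    refine mul_le_mul_of_nonneg_left ?_ (by positivity)
    have hBA : ‖B - A‖ ≤ Ll2 * ‖y₁ - y₂‖ := by
      have := hLyy x y₂ x y₁
      simp only [sub_self, norm_zero, zero_add] at this
      rwa [norm_sub_rev y₂ y₁] at this
    have hRBb : ‖RB b‖ ≤ μ⁻¹ * Cfy := by
      refine (hRB b).trans ?_
      exact mul_le_mul_of_nonneg_left (hCfy x y₂) (by positivity)
    calc ‖(B - A) (RB b)‖ ≤ ‖B - A‖ * ‖RB b‖ := (B - A).le_opNorm _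
    _ ≤ Ll2 * ‖y₁ - y₂‖ * (μ⁻¹ * Cfy) := by
        refine mul_le_mul hBA hRBb (norm_nonneg _) ?_
        have h0 : 0 ≤ ‖B - A‖ := norm_nonneg _
        nlinarith [norm_nonneg (y₁ - y₂), (hLyy x y₂ x y₁), norm_nonneg (B - A)]
  calc ‖RA (a - b) + (RA * (B - A) * RB) b‖
      ≤ ‖RA (a - b)‖ + ‖(RA * (B - A) * RB) b‖ := norm_add_le _ _
    _ ≤ μ⁻¹ * (Lf1 * ‖y₁ - y₂‖) + μ⁻¹ * (Ll2 * ‖y₁ - y₂‖ * (μ⁻¹ * Cfy)) := add_le_add hb1 hb2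
    _ = (Lf1 / μ + Cfy * Ll2 / μ ^ 2) * ‖y₁ - y₂‖ := by
        field_simp
end
end

section
/- Let W be an n×n real matrix with W𝟙 = 𝟙 and 𝟙ᵀW = 𝟙ᵀ, let J := (1/n)𝟙𝟙ᵀ, and suppose ρ := ‖W − J‖₂² < 1, where ‖·‖₂ denotes the ℓ²-operator (spectral) norm. Let (X_t)_{t≥0} and (U_t)_{t≥0} be sequences of n×p real matrices satisfying X_{t+1} = W·(X_t − U_t) for all t. Then for every integer T ≥ 0, Σ_{k=0}^{T} ‖X_k − J X_k‖_F² ≤ (2/(1−ρ)) · ‖X_0 − J X_0‖_F² + (4ρ/(1−ρ)²) · Σ_{k=0}^{T−1} ‖U_k‖_F², where ‖·‖_F is the Frobenius norm. -/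
private lemma young_step (ρ s t P Q : ℝ) (hρ0 : 0 ≤ ρ) (hρ1 : ρ < 1)
    (hs : 0 ≤ s) (ht : 0 ≤ t) (hP : 0 ≤ P) (hQ : 0 ≤ Q)
    (hs2 : s ^ 2 ≤ ρ * P) (ht2 : t ^ 2 ≤ ρ * Q) :
    (1 - ρ) * (s + t) ^ 2 ≤ (1 - ρ) * (1 + ρ) / 2 * P + ρ * (1 + ρ) * Q := by
  rcases eq_or_lt_of_le hρ0 with h0 | h0
  · nlinarith [sq_nonneg (s - t), sq_nonneg (s + t)]
  · nlinarith [sq_nonneg ((1 - ρ) * s - 2 * ρ * t),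
      mul_le_mul_of_nonneg_left hs2 (by nlinarith : (0:ℝ) ≤ 1 - ρ ^ 2),
      mul_le_mul_of_nonneg_left ht2 (by positivity : (0:ℝ) ≤ 2 * ρ * (1 + ρ)),
      mul_pos h0 (by linarith : (0:ℝ) < 1 - ρ)]

private lemma vec_step {n : ℕ} (A : Matrix (Fin n) (Fin n) ℝ) (ρ : ℝ)
    (hρdef : ρ = ‖Matrix.toEuclideanCLM (𝕜 := ℝ) A‖ ^ 2) (hρ1 : ρ < 1)
    (y u : Fin n → ℝ) :
    (1 - ρ) * ∑ i, (A.mulVec (y - u) i) ^ 2 ≤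
      (1 - ρ) * (1 + ρ) / 2 * ∑ i, (y i) ^ 2 + ρ * (1 + ρ) * ∑ i, (u i) ^ 2 := by
  have hρ0 : 0 ≤ ρ := hρdef ▸ sq_nonneg _
  have key : ∀ v : Fin n → ℝ,
      ‖((WithLp.equiv 2 (Fin n → ℝ)).symm v : EuclideanSpace ℝ (Fin n))‖ ^ 2
        = ∑ i, (v i) ^ 2 := by
    intro v
    rw [EuclideanSpace.norm_eq, Real.sq_sqrt (by positivity)]
    simp [Real.norm_eq_abs, sq_abs]
  have bound : ∀ v : Fin n → ℝ,
      ‖((WithLp.equiv 2 (Fin n → ℝ)).symm (A.mulVec v) : EuclideanSpace ℝ (Fin n))‖ ^ 2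
        ≤ ρ * ∑ i, (v i) ^ 2 := by
    intro v
    have h := (Matrix.toEuclideanCLM (𝕜 := ℝ) A).le_opNorm
      ((WithLp.equiv 2 (Fin n → ℝ)).symm v)
    change ‖((WithLp.equiv 2 (Fin n → ℝ)).symm (A.mulVec v) : EuclideanSpace ℝ (Fin n))‖ ≤ ‖Matrix.toEuclideanCLM (𝕜 := ℝ) A‖ * ‖((WithLp.equiv 2 (Fin n → ℝ)).symm v : EuclideanSpace ℝ (Fin n))‖ at h
    have h2 := pow_le_pow_left₀ (norm_nonneg _) h 2
    rw [mul_pow, key, key] at h2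
    rw [key, hρdef]
    exact h2
  set a := ((WithLp.equiv 2 (Fin n → ℝ)).symm (A.mulVec y) : EuclideanSpace ℝ (Fin n))
  set b := ((WithLp.equiv 2 (Fin n → ℝ)).symm (A.mulVec u) : EuclideanSpace ℝ (Fin n))
  have e1 : ∑ i, (A.mulVec (y - u) i) ^ 2 = ‖a - b‖ ^ 2 := by
    have hsub : a - b = (WithLp.equiv 2 (Fin n → ℝ)).symm (A.mulVec y - A.mulVec u) := by
      rfl
    rw [hsub, key, Matrix.mulVec_sub]
  have hab : ‖a - b‖ ^ 2 ≤ (‖a‖ + ‖b‖) ^ 2 :=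
    pow_le_pow_left₀ (norm_nonneg _) (norm_sub_le a b) 2
  have hy := bound y
  have hu := bound u
  have := young_step ρ ‖a‖ ‖b‖ (∑ i, (y i) ^ 2) (∑ i, (u i) ^ 2) hρ0 hρ1
    (norm_nonneg a) (norm_nonneg b) (by positivity) (by positivity) hy hu
  rw [e1]
  nlinarith [hab, this, norm_nonneg (a - b)]

private lemma mat_step {n pdim : ℕ} (A : Matrix (Fin n) (Fin n) ℝ) (ρ : ℝ)
    (hρdef : ρ = ‖Matrix.toEuclideanCLM (𝕜 := ℝ) A‖ ^ 2) (hρ1 : ρ < 1)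
    (Y V : Matrix (Fin n) (Fin pdim) ℝ) :
    (1 - ρ) * ∑ i, ∑ j, ((A * (Y - V)) i j) ^ 2 ≤
      (1 - ρ) * (1 + ρ) / 2 * ∑ i, ∑ j, (Y i j) ^ 2 +
        ρ * (1 + ρ) * ∑ i, ∑ j, (V i j) ^ 2 := by
  have h1 : ∑ i, ∑ j, ((A * (Y - V)) i j) ^ 2 = ∑ j, ∑ i, ((A * (Y - V)) i j) ^ 2 :=
    Finset.sum_comm
  have h2 : ∑ i, ∑ j, (Y i j) ^ 2 = ∑ j, ∑ i, (Y i j) ^ 2 := Finset.sum_comm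
  have h3 : ∑ i, ∑ j, (V i j) ^ 2 = ∑ j, ∑ i, (V i j) ^ 2 := Finset.sum_comm
  rw [h1, h2, h3]
  have hcol : ∀ j, ∑ i, ((A * (Y - V)) i j) ^ 2
      = ∑ i, (A.mulVec ((fun i => Y i j) - fun i => V i j) i) ^ 2 := by
    intro j
    refine Finset.sum_congr rfl fun i _ => ?_
    simp [Matrix.mul_apply, Matrix.mulVec, dotProduct, mul_sub, Finset.sum_sub_distrib]
  calc (1 - ρ) * ∑ j, ∑ i, ((A * (Y - V)) i j) ^ 2
      = ∑ j, (1 - ρ) * ∑ i, ((A * (Y - V)) i j) ^ 2 := Finset.mul_sum _ _ _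
    _ ≤ ∑ j, ((1 - ρ) * (1 + ρ) / 2 * ∑ i, (Y i j) ^ 2
          + ρ * (1 + ρ) * ∑ i, (V i j) ^ 2) := by
        refine Finset.sum_le_sum fun j _ => ?_
        rw [hcol j]
        exact vec_step A ρ hρdef hρ1 _ _
    _ = (1 - ρ) * (1 + ρ) / 2 * ∑ j, ∑ i, (Y i j) ^ 2
          + ρ * (1 + ρ) * ∑ j, ∑ i, (V i j) ^ 2 := by
        rw [Finset.sum_add_distrib, ← Finset.mul_sum, ← Finset.mul_sum]


/-- **Abstract consensus-error bound** (core of Lemma 5 / Lemma D.4): for a doubly stochastic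
mixing matrix `W` whose deviation from the averaging matrix `J = 𝟙𝟙ᵀ/n` has squared spectral
norm `ρ < 1`, and iterates `X (t+1) = W (X t − U t)`, the accumulated squared Frobenius
consensus error is bounded by `2/(1−ρ)·‖X₀ − J X₀‖_F² + 4ρ/(1−ρ)²·∑‖U k‖_F²`. -/
theorem consensus_error_sum_bound
    {n pdim : ℕ}
    (W : Matrix (Fin n) (Fin n) ℝ)
    (hWrow : ∀ i, ∑ j, W i j = 1)
    (hWcol : ∀ j, ∑ i, W i j = 1)
    (J : Matrix (Fin n) (Fin n) ℝ) (hJ : J = Matrix.of fun _ _ => (n : ℝ)⁻¹)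
    (ρ : ℝ) (hρdef : ρ = ‖Matrix.toEuclideanCLM (𝕜 := ℝ) (W - J)‖ ^ 2)
    (hρ : ρ < 1)
    (X U : ℕ → Matrix (Fin n) (Fin pdim) ℝ)
    (hrec : ∀ t, X (t + 1) = W * (X t - U t)) :
    ∀ T : ℕ,
      ∑ k ∈ Finset.range (T + 1), ∑ i, ∑ j, ((X k - J * X k) i j) ^ 2 ≤
        2 / (1 - ρ) * (∑ i, ∑ j, ((X 0 - J * X 0) i j) ^ 2) +
          4 * ρ / (1 - ρ) ^ 2 * ∑ k ∈ Finset.range T, ∑ i, ∑ j, (U k i j) ^ 2 := by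

  have hρ0 : 0 ≤ ρ := hρdef ▸ sq_nonneg _
  have h1ρ : (0:ℝ) < 1 - ρ := by linarith
  -- matrix identities
  have hJW : J * W = J := by
    ext i j
    simp only [Matrix.mul_apply, hJ, Matrix.of_apply]
    rw [← Finset.mul_sum, hWcol j, mul_one]
  have hWJ : W * J = J := by
    ext i j
    simp only [Matrix.mul_apply, hJ, Matrix.of_apply]
    rw [← Finset.sum_mul, hWrow i, one_mul]
  have hJJ : J * J = J := by
    ext i j
    simp only [Matrix.mul_apply, hJ, Matrix.of_apply]
    have hn : (0:ℝ) < n := by exact_mod_cast i.pos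
    rw [Finset.sum_const, Finset.card_univ, Fintype.card_fin, nsmul_eq_mul]
    field_simp
  have hY : ∀ k, X (k + 1) - J * X (k + 1) = (W - J) * ((X k - J * X k) - U k) := by
    intro k
    have e1 : W * (J * X k) = J * X k := by rw [← Matrix.mul_assoc, hWJ]
    have e2 : J * (J * X k) = J * X k := by rw [← Matrix.mul_assoc, hJJ]
    have e3 : J * (W * (X k - U k)) = J * (X k - U k) := by rw [← Matrix.mul_assoc, hJW]
    rw [hrec k, e3, Matrix.sub_mul]
    simp only [Matrix.mul_sub, e1, e2]
    abel
  -- per-step contraction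
  have step : ∀ k,
      (1 - ρ) * ∑ i, ∑ j, ((X (k + 1) - J * X (k + 1)) i j) ^ 2 ≤
        (1 - ρ) * (1 + ρ) / 2 * ∑ i, ∑ j, ((X k - J * X k) i j) ^ 2 +
          ρ * (1 + ρ) * ∑ i, ∑ j, (U k i j) ^ 2 := by
    intro k
    rw [hY k]
    exact mat_step (W - J) ρ hρdef hρ _ _
  have he : ∀ k, (0:ℝ) ≤ ∑ i, ∑ j, ((X k - J * X k) i j) ^ 2 := fun k => by positivity
  have hu : ∀ k, (0:ℝ) ≤ ∑ i, ∑ j, (U k i j) ^ 2 := fun k => by positivity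
  -- scaled claim
  have claim : ∀ T : ℕ,
      (1 - ρ) ^ 2 * ∑ k ∈ Finset.range (T + 1), ∑ i, ∑ j, ((X k - J * X k) i j) ^ 2 ≤
        2 * (1 - ρ) * (∑ i, ∑ j, ((X 0 - J * X 0) i j) ^ 2) +
          4 * ρ * ∑ k ∈ Finset.range T, ∑ i, ∑ j, (U k i j) ^ 2 := by
    intro T
    induction T with
    | zero =>
      simp only [zero_add, Finset.sum_range_one, Finset.range_zero, Finset.sum_empty,
        mul_zero, add_zero]
      nlinarith [he 0, mul_nonneg (mul_nonneg h1ρ.le (by linarith : (0:ℝ) ≤ 1 + ρ)) (he 0)]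
    | succ T ih =>
      rw [Finset.sum_range_succ']
      have hsum : (1 - ρ) * ∑ k ∈ Finset.range (T + 1),
            (∑ i, ∑ j, ((X (k + 1) - J * X (k + 1)) i j) ^ 2) ≤
          (1 - ρ) * (1 + ρ) / 2 *
              ∑ k ∈ Finset.range (T + 1), (∑ i, ∑ j, ((X k - J * X k) i j) ^ 2) +
            ρ * (1 + ρ) * ∑ k ∈ Finset.range (T + 1), (∑ i, ∑ j, (U k i j) ^ 2) := by
        rw [Finset.mul_sum]
        calc ∑ k ∈ Finset.range (T + 1),
              (1 - ρ) * (∑ i, ∑ j, ((X (k + 1) - J * X (k + 1)) i j) ^ 2)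
            ≤ ∑ k ∈ Finset.range (T + 1),
              ((1 - ρ) * (1 + ρ) / 2 * ∑ i, ∑ j, ((X k - J * X k) i j) ^ 2 +
                ρ * (1 + ρ) * ∑ i, ∑ j, (U k i j) ^ 2) :=
              Finset.sum_le_sum fun k _ => step k
          _ = _ := by rw [Finset.sum_add_distrib, ← Finset.mul_sum, ← Finset.mul_sum]
      have hUmono : ∑ k ∈ Finset.range T, (∑ i, ∑ j, (U k i j) ^ 2) ≤
          ∑ k ∈ Finset.range (T + 1), (∑ i, ∑ j, (U k i j) ^ 2) := by
        refine Finset.sum_le_sum_of_subset_of_nonneg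
          (Finset.range_subset_range.2 (Nat.le_succ T)) fun k _ _ => hu k
      have hU0 : (0:ℝ) ≤ ∑ k ∈ Finset.range (T + 1), (∑ i, ∑ j, (U k i j) ^ 2) :=
        Finset.sum_nonneg fun k _ => hu k
      have H1 := mul_le_mul_of_nonneg_left hsum h1ρ.le
      have H2 := mul_le_mul_of_nonneg_left ih (by linarith : (0:ℝ) ≤ (1 + ρ) / 2)
      have H3 := mul_le_mul_of_nonneg_left hUmono
        (by positivity : (0:ℝ) ≤ 2 * ρ * (1 + ρ))
      have H4 : (0:ℝ) ≤ ρ * (1 - ρ) ^ 2 * ∑ k ∈ Finset.range (T + 1),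
          (∑ i, ∑ j, (U k i j) ^ 2) := by positivity
      nlinarith [H1, H2, H3, H4, he 0]
  intro T
  have hC := claim T
  have heq : 2 / (1 - ρ) * (∑ i, ∑ j, ((X 0 - J * X 0) i j) ^ 2) +
      4 * ρ / (1 - ρ) ^ 2 * ∑ k ∈ Finset.range T, ∑ i, ∑ j, (U k i j) ^ 2 =
      (2 * (1 - ρ) * (∑ i, ∑ j, ((X 0 - J * X 0) i j) ^ 2) +
        4 * ρ * ∑ k ∈ Finset.range T, ∑ i, ∑ j, (U k i j) ^ 2) / (1 - ρ) ^ 2 := by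
    field_simp
  rw [heq, le_div_iff₀ (by positivity)]
  nlinarith [hC]
end

section
/- Let W be an n×n real matrix with W𝟙 = 𝟙 and 𝟙ᵀW = 𝟙ᵀ, let J := (1/n)𝟙𝟙ᵀ, and suppose ρ := ‖W − J‖₂² < 1, where ‖·‖₂ is the ℓ²-operator (spectral) norm. Let (k_t)_{t≥0} and (h_t)_{t≥0} be sequences of vectors in ℝⁿ satisfying k_{t+1} = W·(k_t + h_t), with k_0 = J k_0 (consensual initialization) and ‖h_t‖ ≤ G for all t, where ‖·‖ is the Euclidean norm. Then for every t ≥ 0, ‖k_t − J k_t‖² ≤ 2ρ(1+ρ)·G² / (1−ρ)². -/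
/-- **Abstract stepsize-tracking consistency bound** (eqs. 115–117): for a doubly stochastic
mixing matrix `W` with `ρ = ‖W − J‖₂² < 1`, a tracking recursion `k (t+1) = W (k t + h t)`
with consensual initialization and uniformly bounded increments `‖h t‖ ≤ G` keeps the
consensus error of the accumulators uniformly bounded:
`‖k t − J k t‖² ≤ 2ρ(1+ρ)G²/(1−ρ)²` for all `t`. -/
theorem tracking_consensus_error_bound
    {n : ℕ}
    (W : Matrix (Fin n) (Fin n) ℝ)
    (hWrow : ∀ i, ∑ j, W i j = 1)
    (hWcol : ∀ j, ∑ i, W i j = 1)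
    (J : Matrix (Fin n) (Fin n) ℝ) (hJ : J = Matrix.of fun _ _ => (n : ℝ)⁻¹)
    (ρ : ℝ) (hρdef : ρ = ‖Matrix.toEuclideanCLM (𝕜 := ℝ) (W - J)‖ ^ 2)
    (hρ : ρ < 1)
    (k h : ℕ → EuclideanSpace ℝ (Fin n))
    (hrec : ∀ t, k (t + 1) = Matrix.toEuclideanCLM (𝕜 := ℝ) W (k t + h t))
    (hk0 : k 0 = Matrix.toEuclideanCLM (𝕜 := ℝ) J (k 0))
    (G : ℝ) (hG : ∀ t, ‖h t‖ ≤ G) :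
    ∀ t, ‖k t - Matrix.toEuclideanCLM (𝕜 := ℝ) J (k t)‖ ^ 2 ≤
      2 * ρ * (1 + ρ) * G ^ 2 / (1 - ρ) ^ 2 := by
  set T := Matrix.toEuclideanCLM (𝕜 := ℝ) (n := Fin n) with hT
  -- matrix identities
  have hJW : J * W = J := by
    ext i j
    simp only [hJ, Matrix.mul_apply, Matrix.of_apply]
    rw [← Finset.mul_sum, hWcol j, mul_one]
  have hWJ : W * J = J := by
    ext i j
    simp only [hJ, Matrix.mul_apply, Matrix.of_apply]
    rw [← Finset.sum_mul, hWrow i, one_mul]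
  have hJJ : J * J = J := by
    ext i j
    have hn : (n : ℝ) ≠ 0 := Nat.cast_ne_zero.mpr i.pos.ne'
    simp only [hJ, Matrix.mul_apply, Matrix.of_apply]
    rw [Finset.sum_const, Finset.card_univ, Fintype.card_fin, nsmul_eq_mul]
    field_simp
  have hWJ0 : (W - J) * J = 0 := by
    rw [sub_mul, hWJ, hJJ, sub_self]
  -- key recursion for the error
  have hE : ∀ t, k (t + 1) - T J (k (t + 1)) =
      T (W - J) ((k t - T J (k t)) + h t) := by
    intro t
    have h4 : ∀ y, T W (T J y) = T J y := by
      intro y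
      rw [← ContinuousLinearMap.comp_apply, ← ContinuousLinearMap.mul_def, ← map_mul, hWJ]
    have h5 : ∀ y, T J (T J y) = T J y := by
      intro y
      rw [← ContinuousLinearMap.comp_apply, ← ContinuousLinearMap.mul_def, ← map_mul, hJJ]
    have h1 : T J (T W (k t + h t)) = T J (k t + h t) := by
      rw [← ContinuousLinearMap.comp_apply, ← ContinuousLinearMap.mul_def, ← map_mul, hJW]
    rw [hrec t, h1]
    simp only [map_sub, ContinuousLinearMap.sub_apply, map_add, h4, h5]
    abel
  set σ := ‖T (W - J)‖ with hσ
  have hσ0 : (0 : ℝ) ≤ σ := norm_nonneg _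
  have hρσ : ρ = σ ^ 2 := hρdef
  have hσ1 : σ < 1 := by nlinarith [hρσ ▸ hρ]
  have hGnn : (0 : ℝ) ≤ G := le_trans (norm_nonneg _) (hG 0)
  have hbound : ∀ t, ‖k t - T J (k t)‖ ≤ σ * G / (1 - σ) := by
    intro t
    induction t with
    | zero =>
      rw [sub_eq_zero.mpr hk0, norm_zero]
      exact div_nonneg (mul_nonneg hσ0 hGnn) (by linarith)
    | succ t ih =>
      rw [hE t]
      calc ‖T (W - J) ((k t - T J (k t)) + h t)‖
          ≤ σ * ‖(k t - T J (k t)) + h t‖ := (T (W - J)).le_opNorm _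
        _ ≤ σ * (‖k t - T J (k t)‖ + ‖h t‖) :=
            mul_le_mul_of_nonneg_left (norm_add_le _ _) hσ0
        _ ≤ σ * (σ * G / (1 - σ) + G) := by gcongr; exact hG t
        _ = σ * G / (1 - σ) := by
            have hne : (1:ℝ) - σ ≠ 0 := by linarith
            rw [div_add' _ _ _ hne, ← mul_div_assoc]
            congr 1
            ring
  intro t
  have hb := hbound t
  set a := ‖k t - T J (k t)‖ with ha
  have ha0 : (0 : ℝ) ≤ a := norm_nonneg _
  rw [hρσ, le_div_iff₀ (by nlinarith : (0:ℝ) < (1 - σ ^ 2) ^ 2)]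
  have h6 : (0:ℝ) < 1 - σ := by linarith
  have hb' : a * (1 - σ) ≤ σ * G := (le_div_iff₀ h6).mp hb
  have h2 : a ^ 2 * (1 - σ) ^ 2 ≤ σ ^ 2 * G ^ 2 := by
    nlinarith [mul_self_le_mul_self (mul_nonneg ha0 h6.le) hb']
  nlinarith [sq_nonneg (1 - σ), sq_nonneg (1 + σ), mul_nonneg (mul_nonneg hσ0 hσ0) (mul_nonneg hGnn hGnn), sq_nonneg (σ * G), h2, mul_le_mul_of_nonneg_left h2 (sq_nonneg (1 + σ))]
end
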